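/- arXiv:0807.0169 — 6 statements merged into one kernel-verified Lean document; each statement's English description precedes it below -/
import Mathlib

section
/- Let x_1, …, x_N ∈ H with ‖x_k‖ ≤ C for all k, let p be a sampling design with min_k π_k ≥ λ > 0, and set α_k = I_k/π_k − 1. Then E_p ‖(1/N) ∑_{k∈U} α_k x_k‖² ≤ C²/(λ N) + C² ((N−1)/N) · max_{k≠l} |Δ_kl| / λ². -/
open scoped RealInnerProductSpace

noncomputable section

/-- Let `x_1, …, x_N ∈ H` with `‖x_k‖ ≤ C`, let `p` be a sampling design with
`min_k π_k ≥ λ > 0`, and set `α_k = I_k/π_k − 1`.  Then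
`E_p ‖(1/N) ∑_k α_k x_k‖² ≤ C²/(λN) + C² ((N−1)/N) · max_{k≠l} |Δ_kl| / λ²`. -/
theorem variance_bound_for_weighted_HT_sum
    {H : Type*} [NormedAddCommGroup H] [InnerProductSpace ℝ H] [CompleteSpace H]
    (N : ℕ) (hN : 0 < N) (C lam : ℝ) (hlam : 0 < lam)
    (x : Fin N → H) (hx : ∀ k, ‖x k‖ ≤ C)
    (p : Finset (Fin N) → ℝ) (hp0 : ∀ s, 0 ≤ p s)
    (hp1 : ∑ s : Finset (Fin N), p s = 1)
    (π : Fin N → ℝ)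
    (hπ : ∀ k, π k = ∑ s : Finset (Fin N), (if k ∈ s then p s else 0))
    (hπpos : ∀ k, 0 < π k) (hπlb : ∀ k, lam ≤ π k)
    (πd : Fin N → Fin N → ℝ)
    (hπd : ∀ k l, πd k l = ∑ s : Finset (Fin N), (if k ∈ s ∧ l ∈ s then p s else 0)) :
    ∑ s : Finset (Fin N),
        p s * ‖(N : ℝ)⁻¹ • ∑ k, ((if k ∈ s then (π k)⁻¹ else 0) - 1) • x k‖ ^ 2
      ≤ C ^ 2 / (lam * N) +
        C ^ 2 * (((N : ℝ) - 1) / N) *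
          (⨆ k, ⨆ l, ⨆ _ : k ≠ l, |πd k l - π k * π l|) / lam ^ 2 := by
  classical
  have hn : (0:ℝ) < (N:ℝ) := by exact_mod_cast hN
  have hn0 : (N:ℝ) ≠ 0 := ne_of_gt hn
  have hlam0 : lam ≠ 0 := ne_of_gt hlam
  set D : ℝ := ⨆ k, ⨆ l, ⨆ _ : k ≠ l, |πd k l - π k * π l| with hDdef
  have hDle : ∀ k l : Fin N, k ≠ l → |πd k l - π k * π l| ≤ D := by
    intro k l hkl
    haveI : Nonempty (k ≠ l) := ⟨hkl⟩
    have h1 : |πd k l - π k * π l| = ⨆ _ : k ≠ l, |πd k l - π k * π l| :=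
      (ciSup_const).symm
    rw [h1]
    have h2 : (⨆ _ : k ≠ l, |πd k l - π k * π l|)
        ≤ ⨆ l', ⨆ _ : k ≠ l', |πd k l' - π k * π l'| :=
      le_ciSup (f := fun l' => ⨆ _ : k ≠ l', |πd k l' - π k * π l'|)
        (Set.finite_range _).bddAbove l
    exact h2.trans (le_ciSup (f := fun k' => ⨆ l', ⨆ _ : k' ≠ l', |πd k' l' - π k' * π l'|)
        (Set.finite_range _).bddAbove k)
  have key : ∀ k l : Fin N, (∑ s : Finset (Fin N),
      p s * (((if k ∈ s then (π k)⁻¹ else 0) - 1) * ((if l ∈ s then (π l)⁻¹ else 0) - 1)))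
      = πd k l / (π k * π l) - 1 := by
    intro k l
    have hkne := (hπpos k).ne'
    have hlne := (hπpos l).ne'
    have hs : ∀ s : Finset (Fin N),
        p s * (((if k ∈ s then (π k)⁻¹ else 0) - 1) * ((if l ∈ s then (π l)⁻¹ else 0) - 1))
        = (π k * π l)⁻¹ * (if k ∈ s ∧ l ∈ s then p s else 0)
          - (π k)⁻¹ * (if k ∈ s then p s else 0)
          - (π l)⁻¹ * (if l ∈ s then p s else 0)
          + p s := by
      intro s
      by_cases h1 : k ∈ s <;> by_cases h2 : l ∈ s <;>
        simp [h1, h2, mul_inv] <;> ring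
    rw [Finset.sum_congr rfl (fun s _ => hs s)]
    rw [Finset.sum_add_distrib, Finset.sum_sub_distrib, Finset.sum_sub_distrib,
        ← Finset.mul_sum, ← Finset.mul_sum, ← Finset.mul_sum,
        ← hπd k l, ← hπ k, ← hπ l, hp1]
    field_simp
    ring
  have step1 : ∀ s : Finset (Fin N),
      ‖(N : ℝ)⁻¹ • ∑ k, ((if k ∈ s then (π k)⁻¹ else 0) - 1) • x k‖ ^ 2
      = ((N:ℝ)⁻¹)^2 * ∑ k, ∑ l,
          (((if k ∈ s then (π k)⁻¹ else 0) - 1) * ((if l ∈ s then (π l)⁻¹ else 0) - 1))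
            * ⟪x k, x l⟫ := by
    intro s
    rw [norm_smul, mul_pow]
    congr 1
    · rw [Real.norm_eq_abs, sq_abs]
    · rw [← real_inner_self_eq_norm_sq, sum_inner]
      refine Finset.sum_congr rfl fun k _ => ?_
      rw [real_inner_smul_left, inner_sum, Finset.mul_sum]
      refine Finset.sum_congr rfl fun l _ => ?_
      rw [real_inner_smul_right]; ring
  have expand : (∑ s : Finset (Fin N),
      p s * ‖(N : ℝ)⁻¹ • ∑ k, ((if k ∈ s then (π k)⁻¹ else 0) - 1) • x k‖ ^ 2)
      = ((N:ℝ)⁻¹)^2 * ∑ k, ∑ l, (πd k l / (π k * π l) - 1) * ⟪x k, x l⟫ := by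
    simp_rw [step1]
    have h1 : ∀ s : Finset (Fin N),
        p s * (((N:ℝ)⁻¹)^2 * ∑ k, ∑ l,
          (((if k ∈ s then (π k)⁻¹ else 0) - 1) * ((if l ∈ s then (π l)⁻¹ else 0) - 1)) * ⟪x k, x l⟫)
        = ((N:ℝ)⁻¹)^2 * ∑ k, ∑ l,
          (p s * (((if k ∈ s then (π k)⁻¹ else 0) - 1) * ((if l ∈ s then (π l)⁻¹ else 0) - 1))) * ⟪x k, x l⟫ := by
      intro s
      simp only [Finset.mul_sum]
      exact Finset.sum_congr rfl fun k _ => Finset.sum_congr rfl fun l _ => by ring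
    simp_rw [h1]
    rw [← Finset.mul_sum]
    congr 1
    rw [Finset.sum_comm]
    refine Finset.sum_congr rfl fun k _ => ?_
    rw [Finset.sum_comm]
    refine Finset.sum_congr rfl fun l _ => ?_
    rw [← Finset.sum_mul, key k l]
  set A : ℝ := C^2 / lam with hA
  set B : ℝ := C^2 * D / lam^2 with hB
  have hbound : ∀ k l : Fin N, (πd k l / (π k * π l) - 1) * ⟪x k, x l⟫
      ≤ if k = l then A else B := by
    intro k l
    by_cases hkl : k = l
    · subst hkl
      simp only [if_pos rfl]
      have hπk := hπpos k
      have hπdkk : πd k k = π k := by rw [hπd, hπ]; simp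
      have h1 : πd k k / (π k * π k) - 1 = (π k)⁻¹ - 1 := by
        rw [hπdkk]; field_simp
      rw [h1, real_inner_self_eq_norm_sq]
      have hx2 : ‖x k‖^2 ≤ C^2 := by nlinarith [norm_nonneg (x k), hx k]
      have hinv : (π k)⁻¹ ≤ lam⁻¹ := by
        apply inv_anti₀ hlam (hπlb k)
      calc ((π k)⁻¹ - 1) * ‖x k‖^2 ≤ (π k)⁻¹ * ‖x k‖^2 := by nlinarith [sq_nonneg ‖x k‖]
        _ ≤ lam⁻¹ * C^2 :=
            mul_le_mul hinv hx2 (sq_nonneg _) (by positivity)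
        _ = A := by rw [hA]; ring
    · simp only [if_neg hkl]
      have hΔ := hDle k l hkl
      have hD0 : 0 ≤ D := le_trans (abs_nonneg _) hΔ
      have hππ : lam^2 ≤ π k * π l := by nlinarith [hπlb k, hπlb l, hπpos k, hπpos l, hlam]
      have hππpos : 0 < π k * π l := mul_pos (hπpos k) (hπpos l)
      have h1 : πd k l / (π k * π l) - 1 = (πd k l - π k * π l) / (π k * π l) := by
        rw [sub_div, div_self hππpos.ne']
      rw [h1]
      calc (πd k l - π k * π l) / (π k * π l) * ⟪x k, x l⟫
          ≤ |(πd k l - π k * π l) / (π k * π l) * ⟪x k, x l⟫| := le_abs_self _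
        _ = |πd k l - π k * π l| / (π k * π l) * |⟪x k, x l⟫| := by
            rw [abs_mul, abs_div, abs_of_pos hππpos]
        _ ≤ (D / lam^2) * C^2 := by
            apply mul_le_mul
            · exact div_le_div₀ hD0 hΔ (by positivity) hππ
            · calc |⟪x k, x l⟫| ≤ ‖x k‖ * ‖x l‖ := abs_real_inner_le_norm _ _
                _ ≤ C * C := mul_le_mul (hx k) (hx l) (norm_nonneg _)
                    ((norm_nonneg _).trans (hx k))
                _ = C^2 := (sq C).symm
            · exact abs_nonneg _
            · positivity
        _ = B := by rw [hB]; ring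
  calc ∑ s : Finset (Fin N),
        p s * ‖(N : ℝ)⁻¹ • ∑ k, ((if k ∈ s then (π k)⁻¹ else 0) - 1) • x k‖ ^ 2
      = ((N:ℝ)⁻¹)^2 * ∑ k, ∑ l, (πd k l / (π k * π l) - 1) * ⟪x k, x l⟫ := expand
    _ ≤ ((N:ℝ)⁻¹)^2 * ∑ k : Fin N, ∑ l : Fin N, (if k = l then A else B) := by
        apply mul_le_mul_of_nonneg_left _ (by positivity)
        exact Finset.sum_le_sum fun k _ => Finset.sum_le_sum fun l _ => hbound k l
    _ = ((N:ℝ)⁻¹)^2 * ((N:ℝ) * ((N:ℝ) * B + (A - B))) := by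
        congr 1
        have hinner : ∀ k : Fin N, (∑ l : Fin N, (if k = l then A else B))
            = (N:ℝ) * B + (A - B) := by
          intro k
          have h2 : ∀ l : Fin N, (if k = l then A else B)
              = B + (if k = l then A - B else 0) := by
            intro l; split <;> ring
          simp_rw [h2]
          rw [Finset.sum_add_distrib, Finset.sum_const, Finset.sum_ite_eq]
          simp [Finset.card_univ, nsmul_eq_mul]
        simp_rw [hinner]
        rw [Finset.sum_const]
        simp only [Finset.card_univ, Fintype.card_fin, nsmul_eq_mul]
    _ = C ^ 2 / (lam * N) + C ^ 2 * (((N : ℝ) - 1) / N) * D / lam ^ 2 := by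
        rw [hA, hB]; field_simp; ring
end
end

section
/- Under assumptions (A1), (A2) and (A3), the substitution estimator μ̂_ν = (1/N̂_ν) ∑_{k∈s_ν} Y_{k,ν}/π_{k,ν} of the mean curve μ_ν = (1/N_ν) ∑_{k∈U_ν} Y_{k,ν} satisfies E_{p_ν} ‖μ_ν − μ̂_ν‖² = O(1/n_ν); that is, there exists a constant C′ such that for all ν, n_ν · E_{p_ν} ‖μ_ν − μ̂_ν‖² ≤ C′. In particular μ̂_ν is asymptotically design unbiased and consistent. -/
open scoped RealInnerProductSpace
open Filter Topology

noncomputable section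

set_option maxHeartbeats 1600000

/-- Under (A1), (A2), (A3), the substitution estimator
`μ̂_ν = (1/N̂_ν) ∑_{k∈s_ν} Y_{k,ν}/π_{k,ν}` of the mean curve
`μ_ν = (1/N_ν) ∑_{k∈U_ν} Y_{k,ν}` satisfies `E_{p_ν} ‖μ_ν − μ̂_ν‖² = O(1/n_ν)`:
there is a constant `C′` with `n_ν · E_{p_ν} ‖μ_ν − μ̂_ν‖² ≤ C′` for all `ν`. -/
theorem mean_curve_estimator_consistent
    {H : Type*} [NormedAddCommGroup H] [InnerProductSpace ℝ H] [CompleteSpace H]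
    (Nn n : ℕ → ℕ) (hNpos : ∀ ν, 0 < Nn ν) (hNmono : StrictMono Nn)
    (hn : Tendsto n atTop atTop)
    (Y : (ν : ℕ) → Fin (Nn ν) → H)
    (p : (ν : ℕ) → Finset (Fin (Nn ν)) → ℝ)
    (hp0 : ∀ ν s, 0 ≤ p ν s)
    (hp1 : ∀ ν, ∑ s : Finset (Fin (Nn ν)), p ν s = 1)
    (hsize : ∀ ν s, p ν s ≠ 0 → s.card = n ν)
    (π : (ν : ℕ) → Fin (Nn ν) → ℝ)
    (hπ : ∀ ν k, π ν k = ∑ s : Finset (Fin (Nn ν)), (if k ∈ s then p ν s else 0))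
    (πd : (ν : ℕ) → Fin (Nn ν) → Fin (Nn ν) → ℝ)
    (hπd : ∀ ν k l, πd ν k l = ∑ s : Finset (Fin (Nn ν)), (if k ∈ s ∧ l ∈ s then p ν s else 0))
    -- (A1)
    (C : ℝ) (hA1 : ∀ ν k, ‖Y ν k‖ ≤ C)
    -- (A2)
    (π₀ : ℝ) (hπ₀ : π₀ ∈ Set.Ioo (0 : ℝ) 1)
    (hA2 : Tendsto (fun ν => (n ν : ℝ) / (Nn ν : ℝ)) atTop (𝓝 π₀))
    -- (A3)
    (lam lamStar : ℝ) (hlam : 0 < lam) (hlamStar : 0 < lamStar)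
    (hA3a : ∀ ν k, lam ≤ π ν k)
    (hA3b : ∀ ν k l, k ≠ l → lamStar ≤ πd ν k l)
    (CΔ : ℝ)
    (hA3c : ∀ ν (k l : Fin (Nn ν)), k ≠ l → (n ν : ℝ) * |πd ν k l - π ν k * π ν l| ≤ CΔ)
    -- estimators
    (Nhat : (ν : ℕ) → Finset (Fin (Nn ν)) → ℝ)
    (hNhat : ∀ ν s, Nhat ν s = ∑ k ∈ s, (π ν k)⁻¹)
    (μp : (ν : ℕ) → H) (hμp : ∀ ν, μp ν = (Nn ν : ℝ)⁻¹ • ∑ k, Y ν k)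
    (μhat : (ν : ℕ) → Finset (Fin (Nn ν)) → H)
    (hμhat : ∀ ν s, μhat ν s = (Nhat ν s)⁻¹ • ∑ k ∈ s, (π ν k)⁻¹ • Y ν k) :
    ∃ C' : ℝ, ∀ ν, (n ν : ℝ) *
        ∑ s : Finset (Fin (Nn ν)), p ν s * ‖μp ν - μhat ν s‖ ^ 2 ≤ C' := by
  have hC0 : 0 ≤ C := le_trans (norm_nonneg _) (hA1 0 ⟨0, hNpos 0⟩)
  have h2C : 0 ≤ 2 * C := by linarith
  have hπpos : ∀ ν k, 0 < π ν k := fun ν k => lt_of_lt_of_le hlam (hA3a ν k)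
  have hπle1 : ∀ ν k, π ν k ≤ 1 := by
    intro ν k
    rw [hπ ν k, ← hp1 ν]
    refine Finset.sum_le_sum fun s _ => ?_
    split
    · exact le_rfl
    · exact hp0 ν s
  have htend : Tendsto (fun ν => (Nn ν : ℝ) / (n ν : ℝ)) atTop (𝓝 π₀⁻¹) := by
    have h := hA2.inv₀ (ne_of_gt hπ₀.1)
    simpa [inv_div] using h
  obtain ⟨M, hM⟩ := htend.bddAbove_range
  have hMν : ∀ ν, (Nn ν : ℝ) / (n ν : ℝ) ≤ M := fun ν => hM (Set.mem_range_self ν)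
  have hM0 : 0 ≤ M := le_trans (by positivity) (hMν 0)
  set A : ℝ := lam⁻¹ * (lam⁻¹ * (2 * C) ^ 2) with hA
  have hA0 : 0 ≤ A := by positivity
  set D : ℝ := max CΔ 0 with hDdef
  have hD0 : 0 ≤ D := le_max_right _ _
  refine ⟨M * A + M ^ 2 * (D * A), fun ν => ?_⟩
  have hRHS0 : 0 ≤ M * A + M ^ 2 * (D * A) := by positivity
  rcases Nat.eq_zero_or_pos (n ν) with h0 | hn1
  · simpa [h0] using hRHS0
  have hnR : (0:ℝ) < n ν := by exact_mod_cast hn1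
  have hNR : (0:ℝ) < Nn ν := by exact_mod_cast hNpos ν
  set Z : Fin (Nn ν) → H := fun k => μp ν - Y ν k with hZ
  have hZsum : ∑ k, Z k = 0 := by
    have h1 : ∑ k : Fin (Nn ν), Z k = (Nn ν) • μp ν - ∑ k, Y ν k := by
      simp [hZ, Finset.sum_sub_distrib]
    rw [h1, hμp ν, ← Nat.cast_smul_eq_nsmul ℝ, smul_smul,
      mul_inv_cancel₀ hNR.ne', one_smul, sub_self]
  have hμpn : ‖μp ν‖ ≤ C := by
    rw [hμp ν, norm_smul]
    have h1 : ‖∑ k : Fin (Nn ν), Y ν k‖ ≤ (Nn ν : ℝ) * C := by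
      calc ‖∑ k : Fin (Nn ν), Y ν k‖ ≤ ∑ k : Fin (Nn ν), ‖Y ν k‖ := norm_sum_le _ _
        _ ≤ ∑ _k : Fin (Nn ν), C := Finset.sum_le_sum fun k _ => hA1 ν k
        _ = (Nn ν : ℝ) * C := by simp [mul_comm]
    have h2 : ‖(Nn ν : ℝ)⁻¹‖ = (Nn ν : ℝ)⁻¹ := by
      rw [Real.norm_eq_abs, abs_of_pos (by positivity)]
    rw [h2]
    calc (Nn ν:ℝ)⁻¹ * ‖∑ k : Fin (Nn ν), Y ν k‖ ≤ (Nn ν:ℝ)⁻¹ * ((Nn ν:ℝ) * C) :=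
          mul_le_mul_of_nonneg_left h1 (by positivity)
      _ = C := by field_simp
  have hZn : ∀ k, ‖Z k‖ ≤ 2 * C := by
    intro k
    calc ‖Z k‖ ≤ ‖μp ν‖ + ‖Y ν k‖ := norm_sub_le _ _
      _ ≤ C + C := add_le_add hμpn (hA1 ν k)
      _ = 2 * C := by ring
  have hip : ∀ k l, |⟪Z k, Z l⟫| ≤ (2*C)^2 := by
    intro k l
    calc |⟪Z k, Z l⟫| ≤ ‖Z k‖ * ‖Z l‖ := abs_real_inner_le_norm _ _
      _ ≤ (2*C) * (2*C) := mul_le_mul (hZn k) (hZn l) (norm_nonneg _) h2C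
      _ = (2*C)^2 := (sq _).symm
  set W : Finset (Fin (Nn ν)) → H := fun s => ∑ k ∈ s, (π ν k)⁻¹ • Z k with hW
  -- Step 1: pointwise bound by the HT sum
  have hstep1 : ∀ s, p ν s * ‖μp ν - μhat ν s‖^2
      ≤ (n ν:ℝ)⁻¹ * ((n ν:ℝ)⁻¹ * (p ν s * ‖W s‖^2)) := by
    intro s
    rcases eq_or_ne (p ν s) 0 with hps | hps
    · simp [hps]
    · have hcard := hsize ν s hps
      have hNh : (n ν : ℝ) ≤ Nhat ν s := by
        rw [hNhat ν s]
        calc (n ν : ℝ) = ∑ _k ∈ s, (1:ℝ) := by simp [hcard]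
          _ ≤ ∑ k ∈ s, (π ν k)⁻¹ := Finset.sum_le_sum fun k _ =>
              (one_le_inv₀ (hπpos ν k)).mpr (hπle1 ν k)
      have hNhpos : 0 < Nhat ν s := lt_of_lt_of_le hnR hNh
      have hWdecomp : W s = (Nhat ν s) • μp ν - ∑ k ∈ s, (π ν k)⁻¹ • Y ν k := by
        simp [hW, hZ, smul_sub, Finset.sum_sub_distrib, hNhat ν s, Finset.sum_smul]
      have hkey : μp ν - μhat ν s = (Nhat ν s)⁻¹ • W s := by
        rw [hμhat ν s, hWdecomp, smul_sub, smul_smul,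
          inv_mul_cancel₀ hNhpos.ne', one_smul]
      have hnorm : ‖μp ν - μhat ν s‖^2 ≤ (n ν:ℝ)⁻¹ * ((n ν:ℝ)⁻¹ * ‖W s‖^2) := by
        rw [hkey, norm_smul, Real.norm_eq_abs, abs_of_pos (inv_pos.mpr hNhpos), mul_pow]
        have hinv : (Nhat ν s)⁻¹ ≤ (n ν:ℝ)⁻¹ := inv_anti₀ hnR hNh
        calc (Nhat ν s)⁻¹^2 * ‖W s‖^2 ≤ ((n ν:ℝ)⁻¹)^2 * ‖W s‖^2 := by
              refine mul_le_mul_of_nonneg_right ?_ (by positivity)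
              exact pow_le_pow_left₀ (by positivity) hinv 2
          _ = (n ν:ℝ)⁻¹ * ((n ν:ℝ)⁻¹ * ‖W s‖^2) := by ring
      calc p ν s * ‖μp ν - μhat ν s‖^2
          ≤ p ν s * ((n ν:ℝ)⁻¹*((n ν:ℝ)⁻¹*‖W s‖^2)) :=
            mul_le_mul_of_nonneg_left hnorm (hp0 ν s)
        _ = (n ν:ℝ)⁻¹ * ((n ν:ℝ)⁻¹ * (p ν s * ‖W s‖^2)) := by ring
  -- Step 2: expectation identity
  have hstep2 : ∑ s : Finset (Fin (Nn ν)), p ν s * ‖W s‖^2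
      = ∑ k, ∑ l, πd ν k l * ((π ν k)⁻¹ * ((π ν l)⁻¹ * ⟪Z k, Z l⟫)) := by
    have hWs : ∀ s : Finset (Fin (Nn ν)), (‖W s‖:ℝ)^2
        = ∑ k, ∑ l, (if k ∈ s then (π ν k)⁻¹ else 0) *
            ((if l ∈ s then (π ν l)⁻¹ else 0) * ⟪Z k, Z l⟫) := by
      intro s
      have hWrepr : W s = ∑ k, (if k ∈ s then (π ν k)⁻¹ else 0) • Z k := by
        simp only [ite_smul, zero_smul, hW]
        rw [Finset.sum_ite_mem, Finset.univ_inter]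
      rw [← real_inner_self_eq_norm_sq, hWrepr, sum_inner]
      refine Finset.sum_congr rfl fun k _ => ?_
      rw [real_inner_smul_left, inner_sum, Finset.mul_sum]
      refine Finset.sum_congr rfl fun l _ => ?_
      rw [real_inner_smul_right]
    calc ∑ s : Finset (Fin (Nn ν)), p ν s * ‖W s‖^2
        = ∑ s : Finset (Fin (Nn ν)), ∑ k, ∑ l, (if k ∈ s ∧ l ∈ s then p ν s else 0) *
            ((π ν k)⁻¹ * ((π ν l)⁻¹ * ⟪Z k, Z l⟫)) := by
          refine Finset.sum_congr rfl fun s _ => ?_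
          rw [hWs s, Finset.mul_sum]
          refine Finset.sum_congr rfl fun k _ => ?_
          rw [Finset.mul_sum]
          refine Finset.sum_congr rfl fun l _ => ?_
          by_cases hk : k ∈ s <;> by_cases hl : l ∈ s <;> simp [hk, hl] <;> ring
      _ = ∑ k, ∑ l, ∑ s : Finset (Fin (Nn ν)), (if k ∈ s ∧ l ∈ s then p ν s else 0) *
            ((π ν k)⁻¹ * ((π ν l)⁻¹ * ⟪Z k, Z l⟫)) := by
          rw [Finset.sum_comm]
          exact Finset.sum_congr rfl fun k _ => Finset.sum_comm
      _ = ∑ k, ∑ l, πd ν k l * ((π ν k)⁻¹ * ((π ν l)⁻¹ * ⟪Z k, Z l⟫)) := by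
          refine Finset.sum_congr rfl fun k _ => Finset.sum_congr rfl fun l _ => ?_
          rw [← Finset.sum_mul, ← hπd]
  -- the double inner-product sum vanishes
  have hzero : ∑ k, ∑ l, (⟪Z k, Z l⟫ : ℝ) = 0 := by
    have h1 : (⟪∑ k, Z k, ∑ l, Z l⟫ : ℝ) = ∑ k, ∑ l, (⟪Z k, Z l⟫ : ℝ) := by
      rw [sum_inner]
      exact Finset.sum_congr rfl fun k _ => inner_sum _ _ _
    rw [← h1, hZsum, inner_zero_left]
  -- Step 3: variance bound
  have hstep3 : ∑ k, ∑ l, πd ν k l * ((π ν k)⁻¹ * ((π ν l)⁻¹ * ⟪Z k, Z l⟫))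
      ≤ (Nn ν:ℝ) * A + (Nn ν:ℝ)^2 * (D / (n ν:ℝ) * A) := by
    have hsplit : ∀ (k l : Fin (Nn ν)),
        πd ν k l * ((π ν k)⁻¹ * ((π ν l)⁻¹ * ⟪Z k, Z l⟫))
        = ⟪Z k, Z l⟫ + (πd ν k l - π ν k * π ν l) *
            ((π ν k)⁻¹ * ((π ν l)⁻¹ * ⟪Z k, Z l⟫)) := by
      intro k l
      have hk := (hπpos ν k).ne'
      have hl := (hπpos ν l).ne'
      field_simp
      ring
    have hEeq : ∑ k, ∑ l, πd ν k l * ((π ν k)⁻¹ * ((π ν l)⁻¹ * ⟪Z k, Z l⟫))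
        = ∑ k, ∑ l, (πd ν k l - π ν k * π ν l) *
            ((π ν k)⁻¹ * ((π ν l)⁻¹ * ⟪Z k, Z l⟫)) := by
      calc ∑ k, ∑ l, πd ν k l * ((π ν k)⁻¹ * ((π ν l)⁻¹ * ⟪Z k, Z l⟫))
          = ∑ k, ∑ l, (⟪Z k, Z l⟫ + (πd ν k l - π ν k * π ν l) *
              ((π ν k)⁻¹ * ((π ν l)⁻¹ * ⟪Z k, Z l⟫))) :=
            Finset.sum_congr rfl fun k _ => Finset.sum_congr rfl fun l _ => hsplit k l
        _ = (∑ k, ∑ l, (⟪Z k, Z l⟫:ℝ)) + ∑ k, ∑ l, (πd ν k l - π ν k * π ν l) *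
              ((π ν k)⁻¹ * ((π ν l)⁻¹ * ⟪Z k, Z l⟫)) := by
            rw [← Finset.sum_add_distrib]
            exact Finset.sum_congr rfl fun k _ => Finset.sum_add_distrib
        _ = ∑ k, ∑ l, (πd ν k l - π ν k * π ν l) *
              ((π ν k)⁻¹ * ((π ν l)⁻¹ * ⟪Z k, Z l⟫)) := by rw [hzero, zero_add]
    rw [hEeq]
    have hbound : ∀ k l : Fin (Nn ν), (πd ν k l - π ν k * π ν l) *
        ((π ν k)⁻¹ * ((π ν l)⁻¹ * ⟪Z k, Z l⟫))
        ≤ (if l = k then 1 else D / (n ν:ℝ)) * A := by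
      intro k l
      have hXk : |(π ν k)⁻¹| ≤ lam⁻¹ := by
        rw [abs_of_pos (inv_pos.mpr (hπpos ν k))]
        exact inv_anti₀ hlam (hA3a ν k)
      have hXl : |(π ν l)⁻¹| ≤ lam⁻¹ := by
        rw [abs_of_pos (inv_pos.mpr (hπpos ν l))]
        exact inv_anti₀ hlam (hA3a ν l)
      have h1 : |(π ν k)⁻¹ * ((π ν l)⁻¹ * ⟪Z k, Z l⟫)| ≤ A := by
        rw [abs_mul, abs_mul, hA]
        refine mul_le_mul hXk ?_ (by positivity) (by positivity)
        exact mul_le_mul hXl (hip k l) (abs_nonneg _) (by positivity)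
      have h2 : |πd ν k l - π ν k * π ν l| ≤ if l = k then 1 else D / (n ν:ℝ) := by
        split
        · next hlk =>
          subst hlk
          have hd : πd ν l l = π ν l := by rw [hπd, hπ]; simp
          rw [hd]
          have hp1' := hπpos ν l
          have hp2' := hπle1 ν l
          rw [abs_of_nonneg (by nlinarith)]
          nlinarith
        · next hlk =>
          have hne : k ≠ l := fun h => hlk h.symm
          have h3 := hA3c ν k l hne
          have h4 : |πd ν k l - π ν k * π ν l| ≤ CΔ / (n ν:ℝ) := by
            rw [le_div_iff₀ hnR]
            linarith [h3, mul_comm (n ν:ℝ) |πd ν k l - π ν k * π ν l|]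
          exact h4.trans (by gcongr; exact le_max_left CΔ 0)
      calc (πd ν k l - π ν k * π ν l) * ((π ν k)⁻¹ * ((π ν l)⁻¹ * ⟪Z k, Z l⟫))
          ≤ |(πd ν k l - π ν k * π ν l) * ((π ν k)⁻¹ * ((π ν l)⁻¹ * ⟪Z k, Z l⟫))| :=
            le_abs_self _
        _ = |πd ν k l - π ν k * π ν l| * |(π ν k)⁻¹ * ((π ν l)⁻¹ * ⟪Z k, Z l⟫)| :=
            abs_mul _ _
        _ ≤ (if l = k then 1 else D / (n ν:ℝ)) * A := by
            refine mul_le_mul h2 h1 (abs_nonneg _) ?_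
            split
            · exact zero_le_one
            · exact div_nonneg hD0 hnR.le
    have hrow : ∀ k : Fin (Nn ν), ∑ l, (if l = k then (1:ℝ) else D / (n ν:ℝ)) * A
        ≤ (Nn ν:ℝ) * (D / (n ν:ℝ) * A) + A := by
      intro k
      have hterm : ∀ l : Fin (Nn ν), (if l = k then (1:ℝ) else D / (n ν:ℝ)) * A
          ≤ D / (n ν:ℝ) * A + (if l = k then A else 0) := by
        intro l
        have hDA : 0 ≤ D / (n ν:ℝ) * A := by positivity
        split
        · simpa using by linarith
        · simp
      calc ∑ l, (if l = k then (1:ℝ) else D / (n ν:ℝ)) * A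
          ≤ ∑ l : Fin (Nn ν), (D / (n ν:ℝ) * A + (if l = k then A else 0)) :=
            Finset.sum_le_sum fun l _ => hterm l
        _ = (Nn ν:ℝ) * (D / (n ν:ℝ) * A) + A := by
            rw [Finset.sum_add_distrib, Finset.sum_const, Finset.card_univ,
              Fintype.card_fin, Finset.sum_ite_eq' Finset.univ k fun _ => A]
            simp [nsmul_eq_mul]
    calc ∑ k, ∑ l, (πd ν k l - π ν k * π ν l) *
          ((π ν k)⁻¹ * ((π ν l)⁻¹ * ⟪Z k, Z l⟫))
        ≤ ∑ k : Fin (Nn ν), ((Nn ν:ℝ) * (D / (n ν:ℝ) * A) + A) :=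
          Finset.sum_le_sum fun k _ => le_trans
            (Finset.sum_le_sum fun l _ => hbound k l) (hrow k)
      _ = (Nn ν:ℝ) * A + (Nn ν:ℝ)^2 * (D / (n ν:ℝ) * A) := by
          rw [Finset.sum_const, Finset.card_univ, Fintype.card_fin, nsmul_eq_mul]
          ring
  -- assemble
  have hsum_le : ∑ s : Finset (Fin (Nn ν)), p ν s * ‖μp ν - μhat ν s‖^2
      ≤ (n ν:ℝ)⁻¹ * ((n ν:ℝ)⁻¹ *
        ((Nn ν:ℝ) * A + (Nn ν:ℝ)^2 * (D / (n ν:ℝ) * A))) := by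
    calc ∑ s : Finset (Fin (Nn ν)), p ν s * ‖μp ν - μhat ν s‖^2
        ≤ ∑ s : Finset (Fin (Nn ν)), (n ν:ℝ)⁻¹ * ((n ν:ℝ)⁻¹ * (p ν s * ‖W s‖^2)) :=
          Finset.sum_le_sum fun s _ => hstep1 s
      _ = (n ν:ℝ)⁻¹ * ((n ν:ℝ)⁻¹ * ∑ s : Finset (Fin (Nn ν)), p ν s * ‖W s‖^2) := by
          rw [← Finset.mul_sum, ← Finset.mul_sum]
      _ ≤ (n ν:ℝ)⁻¹ * ((n ν:ℝ)⁻¹ *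
          ((Nn ν:ℝ) * A + (Nn ν:ℝ)^2 * (D / (n ν:ℝ) * A))) := by
          rw [hstep2]
          exact mul_le_mul_of_nonneg_left
            (mul_le_mul_of_nonneg_left hstep3 (by positivity)) (by positivity)
  calc (n ν : ℝ) * ∑ s : Finset (Fin (Nn ν)), p ν s * ‖μp ν - μhat ν s‖^2
      ≤ (n ν:ℝ) * ((n ν:ℝ)⁻¹ * ((n ν:ℝ)⁻¹ *
          ((Nn ν:ℝ) * A + (Nn ν:ℝ)^2 * (D / (n ν:ℝ) * A)))) :=
        mul_le_mul_of_nonneg_left hsum_le hnR.le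
    _ = ((Nn ν:ℝ)/(n ν:ℝ)) * A + ((Nn ν:ℝ)/(n ν:ℝ))^2 * (D * A) := by
        field_simp
    _ ≤ M * A + M ^ 2 * (D * A) := by
        have h1 := hMν ν
        have h2 : ((Nn ν:ℝ)/(n ν:ℝ))^2 ≤ M^2 := pow_le_pow_left₀ (by positivity) h1 2
        exact add_le_add (mul_le_mul_of_nonneg_right h1 hA0)
          (mul_le_mul_of_nonneg_right h2 (by positivity))
end
end

section
/- Under assumptions (A1), (A2) and (A3), the substitution estimator Γ̂_ν = (1/N̂_ν) ∑_{k∈s_ν} (Y_{k,ν} ⊗ Y_{k,ν})/π_{k,ν} − μ̂_ν ⊗ μ̂_ν of the covariance operator Γ_ν = (1/N_ν) ∑_{k∈U_ν} (Y_{k,ν} − μ_ν) ⊗ (Y_{k,ν} − μ_ν) satisfies E_{p_ν} ‖Γ_ν − Γ̂_ν‖₂² = O(1/n_ν) in Hilbert–Schmidt norm; that is, there exists a constant C′ such that for all ν, n_ν · E_{p_ν} ‖Γ_ν − Γ̂_ν‖₂² ≤ C′. In particular Γ̂_ν is asymptotically design unbiased and consistent. -/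
open scoped RealInnerProductSpace
open Filter Topology

noncomputable section

/-- The rank-one operator `a ⊗ b : u ↦ ⟪a, u⟫ • b`. -/
def tens {H : Type*} [NormedAddCommGroup H] [InnerProductSpace ℝ H] (a b : H) :
    H →L[ℝ] H := (innerSL ℝ a).smulRight b

/-- The squared Hilbert–Schmidt norm of an operator on `H`, computed in the Hilbert basis
`e`. -/
def hsNormSq {H : Type*} [NormedAddCommGroup H] [InnerProductSpace ℝ H] [CompleteSpace H]
    (e : HilbertBasis ℕ ℝ H) (T : H →L[ℝ] H) : ℝ := ∑' i, ‖T (e i)‖ ^ 2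

section VT
variable {H : Type*} [NormedAddCommGroup H] [InnerProductSpace ℝ H] [CompleteSpace H]
  (e : HilbertBasis ℕ ℝ H)

lemma tens_apply (a b u : H) : tens a b u = ⟪a, u⟫ • b := rfl

lemma memℓp_vT (a b : H) : Memℓp (fun i => (⟪a, e i⟫ : ℝ) • b) 2 := by
  apply memℓp_gen
  have h := (e.summable_inner_mul_inner a a).mul_right (‖b‖ ^ 2)
  apply h.congr
  intro i
  have h1 : (⟪e i, a⟫ : ℝ) = ⟪a, e i⟫ := real_inner_comm _ _
  rw [show ((2 : ENNReal).toReal) = ((2:ℕ):ℝ) by norm_num, Real.rpow_natCast]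
  rw [h1, norm_smul, Real.norm_eq_abs, mul_pow, sq_abs]
  ring

def vT (a b : H) : lp (fun _ : ℕ => H) 2 := ⟨fun i => (⟪a, e i⟫ : ℝ) • b, memℓp_vT e a b⟩

@[simp] lemma vT_apply (a b : H) (i : ℕ) : (vT e a b) i = (⟪a, e i⟫ : ℝ) • b := rfl

lemma vT_add_left (a a' b : H) : vT e (a + a') b = vT e a b + vT e a' b := by
  apply lp.ext; funext i
  simp [lp.coeFn_add, inner_add_left, add_smul]

lemma vT_smul_left (c : ℝ) (a b : H) : vT e (c • a) b = c • vT e a b := by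
  apply lp.ext; funext i
  simp [lp.coeFn_smul, real_inner_smul_left, mul_smul]

lemma vT_add_right (a b b' : H) : vT e a (b + b') = vT e a b + vT e a b' := by
  apply lp.ext; funext i
  simp [lp.coeFn_add, smul_add]

lemma vT_smul_right (c : ℝ) (a b : H) : vT e a (c • b) = c • vT e a b := by
  apply lp.ext; funext i
  rw [lp.coeFn_smul, Pi.smul_apply, vT_apply, vT_apply, smul_comm]

def vTL : H →ₗ[ℝ] H →ₗ[ℝ] lp (fun _ : ℕ => H) 2 :=
  LinearMap.mk₂ ℝ (vT e) (vT_add_left e) (vT_smul_left e) (vT_add_right e) (vT_smul_right e)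

@[simp] lemma vTL_apply (a b : H) : vTL e a b = vT e a b := rfl

lemma inner_vT (a b a' b' : H) :
    (⟪vT e a b, vT e a' b'⟫ : ℝ) = ⟪a, a'⟫ * ⟪b, b'⟫ := by
  have h0 : (⟪vT e a b, vT e a' b'⟫ : ℝ) = ∑' i, ⟪(vT e a b) i, (vT e a' b') i⟫ := rfl
  rw [h0]
  have h1 : ∀ i, (⟪(vT e a b) i, (vT e a' b') i⟫ : ℝ)
      = (⟪a, e i⟫ * ⟪e i, a'⟫) * ⟪b, b'⟫ := by
    intro i
    rw [vT_apply, vT_apply, real_inner_smul_left, real_inner_smul_right,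
      real_inner_comm (e i) a']
    ring
  rw [tsum_congr h1, tsum_mul_right, e.tsum_inner_mul_inner]

lemma norm_vT (a b : H) : ‖vT e a b‖ = ‖a‖ * ‖b‖ := by
  have h : ‖vT e a b‖ ^ 2 = (‖a‖ * ‖b‖) ^ 2 := by
    rw [← real_inner_self_eq_norm_sq, inner_vT, real_inner_self_eq_norm_sq,
      real_inner_self_eq_norm_sq]
    ring
  nlinarith [norm_nonneg (vT e a b), mul_nonneg (norm_nonneg a) (norm_nonneg b)]

lemma hsNormSq_eq_normSq (T : H →L[ℝ] H) (v : lp (fun _ : ℕ => H) 2)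
    (h : ∀ i, T (e i) = v i) : hsNormSq e T = ‖v‖ ^ 2 := by
  have h2 : ‖v‖ ^ 2 = ∑' i, ‖v i‖ ^ 2 := by
    rw [← real_inner_self_eq_norm_sq]
    have h3 : (⟪v, v⟫ : ℝ) = ∑' i, ⟪v i, v i⟫ := rfl
    rw [h3]
    exact tsum_congr fun i => real_inner_self_eq_norm_sq _
  rw [hsNormSq, h2]
  exact tsum_congr fun i => by rw [h i]


lemma vT_sub_left (a a' b : H) : vT e (a - a') b = vT e a b - vT e a' b := by
  apply lp.ext; funext i
  simp [lp.coeFn_sub, inner_sub_left, sub_smul]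

lemma vT_sub_right (a b b' : H) : vT e a (b - b') = vT e a b - vT e a b' := by
  apply lp.ext; funext i
  simp [lp.coeFn_sub, smul_sub]

lemma vT_sum_left {ι : Type*} (s : Finset ι) (f : ι → H) (b : H) :
    vT e (∑ i ∈ s, f i) b = ∑ i ∈ s, vT e (f i) b := by
  exact map_sum ((vTL e).flip b) f s

lemma vT_sum_right {ι : Type*} (s : Finset ι) (a : H) (f : ι → H) :
    vT e a (∑ i ∈ s, f i) = ∑ i ∈ s, vT e a (f i) := by
  exact map_sum (vTL e a) f s

end VT


lemma aux_norm_add_sq {E : Type*} [SeminormedAddCommGroup E] (a b : E) :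
    ‖a + b‖ ^ 2 ≤ 2 * ‖a‖ ^ 2 + 2 * ‖b‖ ^ 2 := by
  nlinarith [norm_add_le a b, norm_nonneg a, norm_nonneg b, norm_nonneg (a + b), sq_nonneg (‖a‖ - ‖b‖), sq_nonneg (‖a‖ + ‖b‖)]

lemma ratio_bound {E : Type*} [NormedAddCommGroup E] [InnerProductSpace ℝ E]
    {N : ℕ} (x : Fin N → E) (M lam δ : ℝ) (hM : 0 ≤ M) (hlam : 0 < lam)
    (hδ : 0 ≤ δ) (hx : ∀ k, ‖x k‖ ≤ M)
    (p : Finset (Fin N) → ℝ) (hp0 : ∀ s, 0 ≤ p s)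
    (hp1 : ∑ s : Finset (Fin N), p s = 1)
    (n : ℕ) (hn : 1 ≤ n) (hsize : ∀ s, p s ≠ 0 → s.card = n)
    (π : Fin N → ℝ)
    (hπ : ∀ k, π k = ∑ s : Finset (Fin N), (if k ∈ s then p s else 0))
    (πd : Fin N → Fin N → ℝ)
    (hπd : ∀ k l, πd k l = ∑ s : Finset (Fin N), (if k ∈ s ∧ l ∈ s then p s else 0))
    (hA3a : ∀ k, lam ≤ π k)
    (hΔ : ∀ k l, k ≠ l → |πd k l - π k * π l| ≤ δ) :
    ∑ s : Finset (Fin N), p s *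
        ‖(N : ℝ)⁻¹ • ∑ k, x k - (∑ k ∈ s, (π k)⁻¹)⁻¹ • ∑ k ∈ s, (π k)⁻¹ • x k‖ ^ 2
      ≤ ((n : ℝ)⁻¹) ^ 2 *
        ((N : ℝ) * (4 * M ^ 2 / lam + (N : ℝ) * (4 * M ^ 2 * δ / lam ^ 2))) := by
  have hπpos : ∀ k, 0 < π k := fun k => lt_of_lt_of_le hlam (hA3a k)
  have hπle1 : ∀ k, π k ≤ 1 := by
    intro k
    rw [hπ k, ← hp1]
    refine Finset.sum_le_sum fun s _ => ?_
    split_ifs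
    · exact le_rfl
    · exact hp0 s
  have hπdiag : ∀ k, πd k k = π k := by
    intro k; rw [hπd, hπ k]
    exact Finset.sum_congr rfl fun s _ => by simp
  set X := (N : ℝ)⁻¹ • ∑ k, x k with hX
  have hXnorm : ‖X‖ ≤ M := by
    rcases Nat.eq_zero_or_pos N with hN0 | hNpos
    · subst hN0; simp [hX, Finset.univ_eq_empty, hM]
    have hNR : (0:ℝ) < N := by exact_mod_cast hNpos
    have h1 : ‖∑ k, x k‖ ≤ (N : ℝ) * M := by
      refine le_trans (norm_sum_le _ _) ?_
      calc ∑ k, ‖x k‖ ≤ ∑ _k : Fin N, M := Finset.sum_le_sum fun k _ => hx k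
        _ = (N : ℝ) * M := by
            rw [Finset.sum_const, Finset.card_univ, Fintype.card_fin, nsmul_eq_mul]
    calc ‖X‖ = (N:ℝ)⁻¹ * ‖∑ k, x k‖ := by
          rw [hX, norm_smul, Real.norm_eq_abs, abs_of_pos (inv_pos.mpr hNR)]
      _ ≤ (N:ℝ)⁻¹ * ((N:ℝ) * M) := by
          exact mul_le_mul_of_nonneg_left h1 (le_of_lt (inv_pos.mpr hNR))
      _ = M := by field_simp
  set z : Fin N → E := fun k => x k - X with hzdef
  have hz : ∀ k, ‖z k‖ ≤ 2 * M := by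
    intro k
    calc ‖x k - X‖ ≤ ‖x k‖ + ‖X‖ := norm_sub_le _ _
      _ ≤ 2 * M := by linarith [hx k, hXnorm]
  have hzsum : ∑ k, z k = 0 := by
    rcases Nat.eq_zero_or_pos N with hN0 | hNpos
    · subst hN0; simp [Finset.univ_eq_empty]
    have hNR : ((N:ℝ)) ≠ 0 := by positivity
    simp only [hzdef]
    rw [Finset.sum_sub_distrib, Finset.sum_const, Finset.card_univ, Fintype.card_fin]
    rw [← Nat.cast_smul_eq_nsmul ℝ, hX, smul_smul, mul_inv_cancel₀ hNR, one_smul, sub_self]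
  have hZexp : ∀ s : Finset (Fin N), ‖∑ k ∈ s, (π k)⁻¹ • z k‖ ^ 2
      = ∑ k ∈ s, ∑ l ∈ s, (π k)⁻¹ * ((π l)⁻¹ * ⟪z k, z l⟫) := by
    intro s
    rw [← real_inner_self_eq_norm_sq, sum_inner]
    refine Finset.sum_congr rfl fun k _ => ?_
    rw [real_inner_smul_left, inner_sum, Finset.mul_sum]
    refine Finset.sum_congr rfl fun l _ => ?_
    rw [real_inner_smul_right]
  have hstep : ∀ s : Finset (Fin N),
      p s * ‖X - (∑ k ∈ s, (π k)⁻¹)⁻¹ • ∑ k ∈ s, (π k)⁻¹ • x k‖ ^ 2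
        ≤ p s * (((n:ℝ)⁻¹) ^ 2 * ∑ k ∈ s, ∑ l ∈ s, (π k)⁻¹ * ((π l)⁻¹ * ⟪z k, z l⟫)) := by
    intro s
    by_cases hps : p s = 0
    · rw [hps]; simp
    · have hcard : s.card = n := hsize s hps
      have hnR : (0:ℝ) < n := by exact_mod_cast hn
      have hNhat : (n : ℝ) ≤ ∑ k ∈ s, (π k)⁻¹ := by
        calc (n:ℝ) = ∑ _k ∈ s, (1:ℝ) := by rw [Finset.sum_const, hcard, nsmul_eq_mul, mul_one]
          _ ≤ ∑ k ∈ s, (π k)⁻¹ := by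
              refine Finset.sum_le_sum fun k _ => ?_
              rw [show (π k)⁻¹ = 1 / π k from (one_div _).symm]
              rw [le_div_iff₀ (hπpos k)]
              linarith [hπle1 k]
      have hNhatpos : 0 < ∑ k ∈ s, (π k)⁻¹ := lt_of_lt_of_le hnR hNhat
      have hkey : X - (∑ k ∈ s, (π k)⁻¹)⁻¹ • ∑ k ∈ s, (π k)⁻¹ • x k
          = -((∑ k ∈ s, (π k)⁻¹)⁻¹ • ∑ k ∈ s, (π k)⁻¹ • z k) := by
        have h1 : ∑ k ∈ s, (π k)⁻¹ • z k
            = (∑ k ∈ s, (π k)⁻¹ • x k) - (∑ k ∈ s, (π k)⁻¹) • X := by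
          simp only [hzdef, smul_sub]
          rw [Finset.sum_sub_distrib, Finset.sum_smul]
        rw [h1, smul_sub, smul_smul, inv_mul_cancel₀ (ne_of_gt hNhatpos), one_smul, neg_sub]
      have hnormeq : ‖X - (∑ k ∈ s, (π k)⁻¹)⁻¹ • ∑ k ∈ s, (π k)⁻¹ • x k‖ ^ 2
          = ((∑ k ∈ s, (π k)⁻¹)⁻¹) ^ 2 * ‖∑ k ∈ s, (π k)⁻¹ • z k‖ ^ 2 := by
        rw [hkey, norm_neg, norm_smul, Real.norm_eq_abs,
          abs_of_pos (inv_pos.mpr hNhatpos), mul_pow]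
      have hg : (∑ k ∈ s, (π k)⁻¹)⁻¹ ≤ (n:ℝ)⁻¹ := inv_anti₀ hnR hNhat
      have hmain : ‖X - (∑ k ∈ s, (π k)⁻¹)⁻¹ • ∑ k ∈ s, (π k)⁻¹ • x k‖ ^ 2
          ≤ ((n:ℝ)⁻¹) ^ 2 * ∑ k ∈ s, ∑ l ∈ s, (π k)⁻¹ * ((π l)⁻¹ * ⟪z k, z l⟫) := by
        rw [hnormeq, ← hZexp s]
        apply mul_le_mul_of_nonneg_right _ (by positivity)
        exact pow_le_pow_left₀ (le_of_lt (inv_pos.mpr hNhatpos)) hg 2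
      exact mul_le_mul_of_nonneg_left hmain (hp0 s)
  have hE : ∑ s : Finset (Fin N), p s * (∑ k ∈ s, ∑ l ∈ s, (π k)⁻¹ * ((π l)⁻¹ * ⟪z k, z l⟫))
      = ∑ k, ∑ l, πd k l * ((π k)⁻¹ * ((π l)⁻¹ * ⟪z k, z l⟫)) := by
    have h1 : ∀ s : Finset (Fin N),
        p s * (∑ k ∈ s, ∑ l ∈ s, (π k)⁻¹ * ((π l)⁻¹ * ⟪z k, z l⟫))
          = ∑ k, ∑ l, (if k ∈ s ∧ l ∈ s then p s else 0)
              * ((π k)⁻¹ * ((π l)⁻¹ * ⟪z k, z l⟫)) := by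
      intro s
      rw [eq_comm]
      calc ∑ k, ∑ l, (if k ∈ s ∧ l ∈ s then p s else 0)
              * ((π k)⁻¹ * ((π l)⁻¹ * ⟪z k, z l⟫))
          = ∑ k, (if k ∈ s then
              (∑ l, if l ∈ s then p s * ((π k)⁻¹ * ((π l)⁻¹ * ⟪z k, z l⟫)) else 0) else 0) := by
            refine Finset.sum_congr rfl fun k _ => ?_
            by_cases hk : k ∈ s
            · simp only [hk, true_and, if_true]
              refine Finset.sum_congr rfl fun l _ => ?_
              split_ifs <;> simp
            · simp [hk]
        _ = ∑ k ∈ s, ∑ l ∈ s, p s * ((π k)⁻¹ * ((π l)⁻¹ * ⟪z k, z l⟫)) := by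
            rw [Finset.sum_ite_mem, Finset.univ_inter]
            refine Finset.sum_congr rfl fun k _ => ?_
            rw [Finset.sum_ite_mem, Finset.univ_inter]
        _ = p s * ∑ k ∈ s, ∑ l ∈ s, (π k)⁻¹ * ((π l)⁻¹ * ⟪z k, z l⟫) := by
            rw [Finset.mul_sum]
            refine Finset.sum_congr rfl fun k _ => (Finset.mul_sum _ _ _).symm
    calc ∑ s : Finset (Fin N), p s * (∑ k ∈ s, ∑ l ∈ s, (π k)⁻¹ * ((π l)⁻¹ * ⟪z k, z l⟫))
        = ∑ s : Finset (Fin N), ∑ k, ∑ l, (if k ∈ s ∧ l ∈ s then p s else 0)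
            * ((π k)⁻¹ * ((π l)⁻¹ * ⟪z k, z l⟫)) := Finset.sum_congr rfl fun s _ => h1 s
      _ = ∑ k, ∑ l, ∑ s : Finset (Fin N), (if k ∈ s ∧ l ∈ s then p s else 0)
            * ((π k)⁻¹ * ((π l)⁻¹ * ⟪z k, z l⟫)) := by
          rw [Finset.sum_comm]
          exact Finset.sum_congr rfl fun k _ => Finset.sum_comm
      _ = ∑ k, ∑ l, πd k l * ((π k)⁻¹ * ((π l)⁻¹ * ⟪z k, z l⟫)) := by
          refine Finset.sum_congr rfl fun k _ => Finset.sum_congr rfl fun l _ => ?_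
          rw [← Finset.sum_mul, ← hπd]
  have hy0 : ∑ k, ∑ l, (⟪z k, z l⟫ : ℝ) = 0 := by
    calc ∑ k, ∑ l, (⟪z k, z l⟫ : ℝ) = ∑ k, (⟪z k, ∑ l, z l⟫ : ℝ) :=
          Finset.sum_congr rfl fun k _ => (inner_sum _ _ _).symm
      _ = ⟪∑ k, z k, ∑ l, z l⟫ := (sum_inner _ _ _).symm
      _ = 0 := by rw [hzsum, inner_zero_left]
  have hEsplit : ∑ k, ∑ l, πd k l * ((π k)⁻¹ * ((π l)⁻¹ * ⟪z k, z l⟫))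
      = ∑ k, ∑ l, (πd k l - π k * π l) * ((π k)⁻¹ * ((π l)⁻¹ * ⟪z k, z l⟫)) := by
    have h2 : ∀ k l, πd k l * ((π k)⁻¹ * ((π l)⁻¹ * ⟪z k, z l⟫))
        = (πd k l - π k * π l) * ((π k)⁻¹ * ((π l)⁻¹ * ⟪z k, z l⟫)) + ⟪z k, z l⟫ := by
      intro k l
      have hk := ne_of_gt (hπpos k)
      have hl := ne_of_gt (hπpos l)
      field_simp
      ring
    have h3 : ∑ k, ∑ l, πd k l * ((π k)⁻¹ * ((π l)⁻¹ * ⟪z k, z l⟫))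
        = (∑ k, ∑ l, (πd k l - π k * π l) * ((π k)⁻¹ * ((π l)⁻¹ * ⟪z k, z l⟫)))
          + ∑ k, ∑ l, (⟪z k, z l⟫ : ℝ) := by
      rw [← Finset.sum_add_distrib]
      refine Finset.sum_congr rfl fun k _ => ?_
      rw [← Finset.sum_add_distrib]
      exact Finset.sum_congr rfl fun l _ => h2 k l
    rw [h3, hy0, add_zero]
  have hbound : ∑ k, ∑ l, (πd k l - π k * π l) * ((π k)⁻¹ * ((π l)⁻¹ * ⟪z k, z l⟫))
      ≤ (N : ℝ) * (4 * M ^ 2 / lam + (N : ℝ) * (4 * M ^ 2 * δ / lam ^ 2)) := by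
    have hA : ∀ k, (πd k k - π k * π k) * ((π k)⁻¹ * ((π k)⁻¹ * ⟪z k, z k⟫))
        ≤ 4 * M ^ 2 / lam := by
      intro k
      have hc1 : 0 < π k := hπpos k
      have hc2 : π k ≤ 1 := hπle1 k
      have hw : (⟪z k, z k⟫ : ℝ) = ‖z k‖ ^ 2 := real_inner_self_eq_norm_sq _
      rw [hπdiag k, hw]
      have hc1' : π k ≠ 0 := ne_of_gt hc1
      have heq : (π k - π k * π k) * ((π k)⁻¹ * ((π k)⁻¹ * ‖z k‖ ^ 2))
          = (1 - π k) * ((π k)⁻¹ * ‖z k‖ ^ 2) := by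
        field_simp
      rw [heq]
      have h1 : (π k)⁻¹ ≤ lam⁻¹ := inv_anti₀ hlam (hA3a k)
      have h2 : ‖z k‖ ^ 2 ≤ 4 * M ^ 2 := by nlinarith [hz k, norm_nonneg (z k)]
      have h4 : (0:ℝ) < lam⁻¹ := inv_pos.mpr hlam
      have h5 : (1 - π k) * ((π k)⁻¹ * ‖z k‖ ^ 2) ≤ 1 * (lam⁻¹ * (4 * M ^ 2)) := by
        apply mul_le_mul (by linarith)
          (mul_le_mul h1 h2 (by positivity) (le_of_lt h4)) (by positivity) (by norm_num)
      rw [div_eq_mul_inv]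
      linarith
    have hB : ∀ k l, k ≠ l → (πd k l - π k * π l) * ((π k)⁻¹ * ((π l)⁻¹ * ⟪z k, z l⟫))
        ≤ 4 * M ^ 2 * δ / lam ^ 2 := by
      intro k l hkl
      have h3 : |(⟪z k, z l⟫ : ℝ)| ≤ 4 * M ^ 2 := by
        calc |(⟪z k, z l⟫ : ℝ)| ≤ ‖z k‖ * ‖z l‖ := abs_real_inner_le_norm _ _
          _ ≤ (2 * M) * (2 * M) :=
              mul_le_mul (hz k) (hz l) (norm_nonneg _) (by linarith)
          _ = 4 * M ^ 2 := by ring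
      have h4 : (π k)⁻¹ ≤ lam⁻¹ := inv_anti₀ hlam (hA3a k)
      have h5 : (π l)⁻¹ ≤ lam⁻¹ := inv_anti₀ hlam (hA3a l)
      have h6 := hΔ k l hkl
      have h4' : (0:ℝ) < lam⁻¹ := inv_pos.mpr hlam
      calc (πd k l - π k * π l) * ((π k)⁻¹ * ((π l)⁻¹ * ⟪z k, z l⟫))
          ≤ |(πd k l - π k * π l) * ((π k)⁻¹ * ((π l)⁻¹ * ⟪z k, z l⟫))| := le_abs_self _
        _ = |πd k l - π k * π l| * ((π k)⁻¹ * ((π l)⁻¹ * |(⟪z k, z l⟫ : ℝ)|)) := by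
            rw [abs_mul, abs_mul, abs_mul, abs_of_pos (inv_pos.mpr (hπpos k)),
              abs_of_pos (inv_pos.mpr (hπpos l))]
        _ ≤ δ * (lam⁻¹ * (lam⁻¹ * (4 * M ^ 2))) := by
            have hik : (0:ℝ) ≤ (π k)⁻¹ := le_of_lt (inv_pos.mpr (hπpos k))
            have hil : (0:ℝ) ≤ (π l)⁻¹ := le_of_lt (inv_pos.mpr (hπpos l))
            apply mul_le_mul h6 _ (mul_nonneg hik (mul_nonneg hil (abs_nonneg _))) hδ
            apply mul_le_mul h4 _ (mul_nonneg hil (abs_nonneg _)) (le_of_lt h4')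
            exact mul_le_mul h5 h3 (abs_nonneg _) (le_of_lt h4')
        _ = 4 * M ^ 2 * δ / lam ^ 2 := by
            field_simp
    calc ∑ k, ∑ l, (πd k l - π k * π l) * ((π k)⁻¹ * ((π l)⁻¹ * ⟪z k, z l⟫))
        ≤ ∑ _k : Fin N, (4 * M ^ 2 / lam + (N : ℝ) * (4 * M ^ 2 * δ / lam ^ 2)) := by
          refine Finset.sum_le_sum fun k _ => ?_
          rw [← Finset.add_sum_erase _ _ (Finset.mem_univ k)]
          have hrest : ∑ l ∈ Finset.univ.erase k,
              (πd k l - π k * π l) * ((π k)⁻¹ * ((π l)⁻¹ * ⟪z k, z l⟫))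
                ≤ ∑ _l ∈ Finset.univ.erase k, (4 * M ^ 2 * δ / lam ^ 2) :=
            Finset.sum_le_sum fun l hl => hB k l (Ne.symm (Finset.ne_of_mem_erase hl))
          have hcount : ∑ _l ∈ Finset.univ.erase k, (4 * M ^ 2 * δ / lam ^ 2)
              ≤ (N : ℝ) * (4 * M ^ 2 * δ / lam ^ 2) := by
            rw [Finset.sum_const, nsmul_eq_mul]
            apply mul_le_mul_of_nonneg_right _ (by positivity)
            calc ((Finset.univ.erase k).card : ℝ) ≤ ((Finset.univ : Finset (Fin N)).card : ℝ) := by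
                  exact_mod_cast Finset.card_erase_le
              _ = (N : ℝ) := by rw [Finset.card_univ, Fintype.card_fin]
          linarith [hA k]
      _ = (N : ℝ) * (4 * M ^ 2 / lam + (N : ℝ) * (4 * M ^ 2 * δ / lam ^ 2)) := by
          rw [Finset.sum_const, nsmul_eq_mul, Finset.card_univ, Fintype.card_fin]
  calc ∑ s : Finset (Fin N), p s *
        ‖X - (∑ k ∈ s, (π k)⁻¹)⁻¹ • ∑ k ∈ s, (π k)⁻¹ • x k‖ ^ 2
      ≤ ∑ s : Finset (Fin N), p s * (((n:ℝ)⁻¹) ^ 2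
          * ∑ k ∈ s, ∑ l ∈ s, (π k)⁻¹ * ((π l)⁻¹ * ⟪z k, z l⟫)) :=
        Finset.sum_le_sum fun s _ => hstep s
    _ = ((n:ℝ)⁻¹) ^ 2 * ∑ s : Finset (Fin N), p s
          * (∑ k ∈ s, ∑ l ∈ s, (π k)⁻¹ * ((π l)⁻¹ * ⟪z k, z l⟫)) := by
        rw [Finset.mul_sum]
        exact Finset.sum_congr rfl fun s _ => by ring
    _ = ((n:ℝ)⁻¹) ^ 2 * ∑ k, ∑ l, (πd k l - π k * π l)
          * ((π k)⁻¹ * ((π l)⁻¹ * ⟪z k, z l⟫)) := by rw [hE, hEsplit]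
    _ ≤ ((n:ℝ)⁻¹) ^ 2 *
        ((N : ℝ) * (4 * M ^ 2 / lam + (N : ℝ) * (4 * M ^ 2 * δ / lam ^ 2))) :=
        mul_le_mul_of_nonneg_left hbound (by positivity)


set_option maxHeartbeats 1000000 in
/-- Under (A1), (A2), (A3), the substitution estimator
`Γ̂_ν = (1/N̂_ν) ∑_{k∈s_ν} (Y_{k,ν} ⊗ Y_{k,ν})/π_{k,ν} − μ̂_ν ⊗ μ̂_ν` of the covariance
operator `Γ_ν` satisfies `E_{p_ν} ‖Γ_ν − Γ̂_ν‖₂² = O(1/n_ν)` in Hilbert–Schmidt norm. -/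
theorem covariance_operator_estimator_consistent
    {H : Type*} [NormedAddCommGroup H] [InnerProductSpace ℝ H] [CompleteSpace H]
    (e : HilbertBasis ℕ ℝ H)
    (Nn n : ℕ → ℕ) (hNpos : ∀ ν, 0 < Nn ν) (hNmono : StrictMono Nn)
    (hn : Tendsto n atTop atTop)
    (Y : (ν : ℕ) → Fin (Nn ν) → H)
    (p : (ν : ℕ) → Finset (Fin (Nn ν)) → ℝ)
    (hp0 : ∀ ν s, 0 ≤ p ν s)
    (hp1 : ∀ ν, ∑ s : Finset (Fin (Nn ν)), p ν s = 1)
    (hsize : ∀ ν s, p ν s ≠ 0 → s.card = n ν)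
    (π : (ν : ℕ) → Fin (Nn ν) → ℝ)
    (hπ : ∀ ν k, π ν k = ∑ s : Finset (Fin (Nn ν)), (if k ∈ s then p ν s else 0))
    (πd : (ν : ℕ) → Fin (Nn ν) → Fin (Nn ν) → ℝ)
    (hπd : ∀ ν k l, πd ν k l = ∑ s : Finset (Fin (Nn ν)), (if k ∈ s ∧ l ∈ s then p ν s else 0))
    -- (A1)
    (C : ℝ) (hA1 : ∀ ν k, ‖Y ν k‖ ≤ C)
    -- (A2)
    (π₀ : ℝ) (hπ₀ : π₀ ∈ Set.Ioo (0 : ℝ) 1)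
    (hA2 : Tendsto (fun ν => (n ν : ℝ) / (Nn ν : ℝ)) atTop (𝓝 π₀))
    -- (A3)
    (lam lamStar : ℝ) (hlam : 0 < lam) (hlamStar : 0 < lamStar)
    (hA3a : ∀ ν k, lam ≤ π ν k)
    (hA3b : ∀ ν k l, k ≠ l → lamStar ≤ πd ν k l)
    (CΔ : ℝ)
    (hA3c : ∀ ν (k l : Fin (Nn ν)), k ≠ l → (n ν : ℝ) * |πd ν k l - π ν k * π ν l| ≤ CΔ)
    -- population parameters and their substitution estimators
    (μp : (ν : ℕ) → H) (hμp : ∀ ν, μp ν = (Nn ν : ℝ)⁻¹ • ∑ k, Y ν k)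
    (Γp : (ν : ℕ) → H →L[ℝ] H)
    (hΓp : ∀ ν, Γp ν = (Nn ν : ℝ)⁻¹ • ∑ k, tens (Y ν k - μp ν) (Y ν k - μp ν))
    (Nhat : (ν : ℕ) → Finset (Fin (Nn ν)) → ℝ)
    (hNhat : ∀ ν s, Nhat ν s = ∑ k ∈ s, (π ν k)⁻¹)
    (μhat : (ν : ℕ) → Finset (Fin (Nn ν)) → H)
    (hμhat : ∀ ν s, μhat ν s = (Nhat ν s)⁻¹ • ∑ k ∈ s, (π ν k)⁻¹ • Y ν k)
    (Γhat : (ν : ℕ) → Finset (Fin (Nn ν)) → H →L[ℝ] H)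
    (hΓhat : ∀ ν s, Γhat ν s = (Nhat ν s)⁻¹ • (∑ k ∈ s, (π ν k)⁻¹ • tens (Y ν k) (Y ν k))
        - tens (μhat ν s) (μhat ν s)) :
    ∃ C' : ℝ, ∀ ν, (n ν : ℝ) *
        ∑ s : Finset (Fin (Nn ν)), p ν s * hsNormSq e (Γp ν - Γhat ν s) ≤ C' := by
  classical
  have hπ0pos : (0:ℝ) < π₀ := hπ₀.1
  have hC0 : (0:ℝ) ≤ C := le_trans (norm_nonneg _) (hA1 0 ⟨0, hNpos 0⟩)
  have hCΔ0 : (0:ℝ) ≤ CΔ := by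
    obtain ⟨ν₁, hν₁⟩ := Filter.eventually_atTop.mp (hn.eventually_ge_atTop 1)
    have hnν : 1 ≤ n (max ν₁ 1) := hν₁ _ (le_max_left _ _)
    have hNν : 2 ≤ Nn (max ν₁ 1) := by
      have h01 : Nn 0 < Nn 1 := hNmono Nat.zero_lt_one
      have h1ν : Nn 1 ≤ Nn (max ν₁ 1) := hNmono.monotone (le_max_right _ _)
      have h0 := hNpos 0
      omega
    have h := hA3c (max ν₁ 1) ⟨0, by omega⟩ ⟨1, by omega⟩ (by simp [Fin.ext_iff])
    exact le_trans (mul_nonneg (Nat.cast_nonneg _) (abs_nonneg _)) h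
  obtain ⟨ν₀, hν₀⟩ := Filter.eventually_atTop.mp
    (hA2.eventually (eventually_gt_nhds (show π₀/2 < π₀ by linarith)))
  have hK0 : (0:ℝ) ≤ 2/π₀ + ∑ j ∈ Finset.range ν₀, (Nn j : ℝ) := by positivity
  set K : ℝ := 2/π₀ + ∑ j ∈ Finset.range ν₀, (Nn j : ℝ) with hKdef
  have hK : ∀ ν, 1 ≤ n ν → (Nn ν : ℝ) ≤ K * n ν := by
    intro ν hn1
    have hnR : (0:ℝ) < n ν := by exact_mod_cast hn1
    have hNR : (0:ℝ) < Nn ν := by exact_mod_cast hNpos ν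
    by_cases hge : ν₀ ≤ ν
    · have h := hν₀ ν hge
      rw [lt_div_iff₀ hNR] at h
      have hsumnn : (0:ℝ) ≤ ∑ j ∈ Finset.range ν₀, (Nn j:ℝ) := by positivity
      have h2 : (Nn ν:ℝ) ≤ 2/π₀ * n ν := by
        rw [div_mul_eq_mul_div, le_div_iff₀ hπ0pos]
        nlinarith
      rw [hKdef]
      nlinarith [mul_nonneg hsumnn (le_of_lt hnR)]
    · push_neg at hge
      have h1 : (Nn ν:ℝ) ≤ ∑ j ∈ Finset.range ν₀, (Nn j:ℝ) :=
        Finset.single_le_sum (f := fun j => ((Nn j : ℝ))) (fun j _ => by positivity)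
          (Finset.mem_range.mpr hge)
      have h2 : (0:ℝ) < 2/π₀ := by positivity
      have hsumnn : (0:ℝ) ≤ ∑ j ∈ Finset.range ν₀, (Nn j:ℝ) := by positivity
      have hn1R : (1:ℝ) ≤ (n ν:ℝ) := by exact_mod_cast hn1
      rw [hKdef]
      nlinarith [mul_nonneg hsumnn (sub_nonneg.mpr hn1R), mul_le_mul_of_nonneg_left hn1R (le_of_lt h2)]
  refine ⟨40*C^4*K/lam + 40*C^4*CΔ*K^2/lam^2, fun ν => ?_⟩
  by_cases hn1 : 1 ≤ n ν
  swap
  · have hzero : n ν = 0 := by omega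
    rw [hzero]
    simp only [Nat.cast_zero, zero_mul]
    positivity
  · have hnR : (0:ℝ) < n ν := by exact_mod_cast hn1
    have hNR : (0:ℝ) < Nn ν := by exact_mod_cast hNpos ν
    have hδ : ∀ k l : Fin (Nn ν), k ≠ l → |πd ν k l - π ν k * π ν l| ≤ CΔ / n ν := by
      intro k l hkl
      rw [le_div_iff₀ hnR]
      have h := hA3c ν k l hkl
      linarith
    have hδ0 : (0:ℝ) ≤ CΔ / n ν := by positivity
    have hunorm : ∀ k, ‖vT e (Y ν k) (Y ν k)‖ ≤ C^2 := by
      intro k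
      rw [norm_vT]
      have := hA1 ν k
      nlinarith [norm_nonneg (Y ν k)]
    have hμnorm : ‖μp ν‖ ≤ C := by
      rw [hμp]
      calc ‖(Nn ν:ℝ)⁻¹ • ∑ k, Y ν k‖ = (Nn ν:ℝ)⁻¹ * ‖∑ k, Y ν k‖ := by
            rw [norm_smul, Real.norm_eq_abs, abs_of_pos (inv_pos.mpr hNR)]
        _ ≤ (Nn ν:ℝ)⁻¹ * ((Nn ν:ℝ) * C) := by
            apply mul_le_mul_of_nonneg_left _ (le_of_lt (inv_pos.mpr hNR))
            refine le_trans (norm_sum_le _ _) ?_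
            calc ∑ k, ‖Y ν k‖ ≤ ∑ _k : Fin (Nn ν), C := Finset.sum_le_sum fun k _ => hA1 ν k
              _ = (Nn ν:ℝ) * C := by
                  rw [Finset.sum_const, Finset.card_univ, Fintype.card_fin, nsmul_eq_mul]
        _ = C := by field_simp
    have hπpos : ∀ k, 0 < π ν k := fun k => lt_of_lt_of_le hlam (hA3a ν k)
    have hπle1 : ∀ k, π ν k ≤ 1 := by
      intro k
      rw [hπ ν k, ← hp1 ν]
      refine Finset.sum_le_sum fun s _ => ?_
      split_ifs
      · exact le_rfl
      · exact hp0 ν s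
    have hNhatlb : ∀ s : Finset (Fin (Nn ν)), p ν s ≠ 0 → (n ν:ℝ) ≤ Nhat ν s := by
      intro s hps
      rw [hNhat]
      calc (n ν:ℝ) = ∑ _k ∈ s, (1:ℝ) := by
            rw [Finset.sum_const, hsize ν s hps, nsmul_eq_mul, mul_one]
        _ ≤ ∑ k ∈ s, (π ν k)⁻¹ := by
            refine Finset.sum_le_sum fun k _ => ?_
            rw [show (π ν k)⁻¹ = 1 / π ν k from (one_div _).symm, le_div_iff₀ (hπpos k)]
            linarith [hπle1 k]
    have hμhnorm : ∀ s, p ν s ≠ 0 → ‖μhat ν s‖ ≤ C := by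
      intro s hps
      have hNh : 0 < Nhat ν s := lt_of_lt_of_le hnR (hNhatlb s hps)
      have hNh' : Nhat ν s ≠ 0 := ne_of_gt hNh
      rw [hμhat]
      calc ‖(Nhat ν s)⁻¹ • ∑ k ∈ s, (π ν k)⁻¹ • Y ν k‖
          = (Nhat ν s)⁻¹ * ‖∑ k ∈ s, (π ν k)⁻¹ • Y ν k‖ := by
            rw [norm_smul, Real.norm_eq_abs, abs_of_pos (inv_pos.mpr hNh)]
        _ ≤ (Nhat ν s)⁻¹ * (Nhat ν s * C) := by
            apply mul_le_mul_of_nonneg_left _ (le_of_lt (inv_pos.mpr hNh))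
            refine le_trans (norm_sum_le _ _) ?_
            rw [hNhat, Finset.sum_mul]
            refine Finset.sum_le_sum fun k _ => ?_
            rw [norm_smul, Real.norm_eq_abs, abs_of_pos (inv_pos.mpr (hπpos k))]
            exact mul_le_mul_of_nonneg_left (hA1 ν k) (le_of_lt (inv_pos.mpr (hπpos k)))
        _ = C := by field_simp
    -- identification of the HS norm with an ℓ² norm
    have hdecomp : ∀ s : Finset (Fin (Nn ν)),
        (Nn ν:ℝ)⁻¹ • ∑ k, vT e (Y ν k - μp ν) (Y ν k - μp ν)
          - ((Nhat ν s)⁻¹ • ∑ k ∈ s, (π ν k)⁻¹ • vT e (Y ν k) (Y ν k)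
              - vT e (μhat ν s) (μhat ν s))
        = ((Nn ν:ℝ)⁻¹ • ∑ k, vT e (Y ν k) (Y ν k)
            - (∑ k ∈ s, (π ν k)⁻¹)⁻¹ • ∑ k ∈ s, (π ν k)⁻¹ • vT e (Y ν k) (Y ν k))
          + (vT e (μhat ν s) (μhat ν s) - vT e (μp ν) (μp ν)) := by
      intro s
      have hY : ∑ k, Y ν k = (Nn ν:ℝ) • μp ν := by
        rw [hμp, smul_smul, mul_inv_cancel₀ (ne_of_gt hNR), one_smul]
      have hexp : ∀ k : Fin (Nn ν), vT e (Y ν k - μp ν) (Y ν k - μp ν)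
          = vT e (Y ν k) (Y ν k) - vT e (Y ν k) (μp ν)
            - vT e (μp ν) (Y ν k) + vT e (μp ν) (μp ν) := by
        intro k
        rw [vT_sub_left, vT_sub_right, vT_sub_right]
        abel
      have hsl : ∑ k, vT e (Y ν k) (μp ν) = vT e (∑ k, Y ν k) (μp ν) :=
        (vT_sum_left e Finset.univ (Y ν) (μp ν)).symm
      have hsr : ∑ k, vT e (μp ν) (Y ν k) = vT e (μp ν) (∑ k, Y ν k) :=
        (vT_sum_right e Finset.univ (μp ν) (Y ν)).symm
      have hsum1 : ∑ k, vT e (Y ν k - μp ν) (Y ν k - μp ν)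
          = (∑ k, vT e (Y ν k) (Y ν k)) - (Nn ν:ℝ) • vT e (μp ν) (μp ν) := by
        rw [Finset.sum_congr rfl fun k _ => hexp k, Finset.sum_add_distrib,
          Finset.sum_sub_distrib, Finset.sum_sub_distrib, hsl, hsr, hY,
          vT_smul_left, vT_smul_right, Finset.sum_const, Finset.card_univ,
          Fintype.card_fin, ← Nat.cast_smul_eq_nsmul ℝ]
        abel
      rw [hNhat, hsum1, smul_sub, smul_smul, inv_mul_cancel₀ (ne_of_gt hNR), one_smul]
      abel
    have hQ : ∀ s : Finset (Fin (Nn ν)), hsNormSq e (Γp ν - Γhat ν s)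
        = ‖((Nn ν:ℝ)⁻¹ • ∑ k, vT e (Y ν k) (Y ν k)
            - (∑ k ∈ s, (π ν k)⁻¹)⁻¹ • ∑ k ∈ s, (π ν k)⁻¹ • vT e (Y ν k) (Y ν k))
          + (vT e (μhat ν s) (μhat ν s) - vT e (μp ν) (μp ν))‖^2 := by
      intro s
      apply hsNormSq_eq_normSq
      intro i
      rw [← hdecomp s, hΓp, hΓhat]
      simp only [lp.coeFn_sub, lp.coeFn_smul, lp.coeFn_sum]
      simp [tens_apply, lp.coeFn_sub, lp.coeFn_smul, lp.coeFn_sum, Finset.sum_apply,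
        Pi.smul_apply, Pi.sub_apply, ContinuousLinearMap.sub_apply,
        ContinuousLinearMap.smul_apply, ContinuousLinearMap.sum_apply]
    -- per-sample bound
    have hsumineq : ∑ s : Finset (Fin (Nn ν)), p ν s * hsNormSq e (Γp ν - Γhat ν s)
        ≤ 2 * (∑ s : Finset (Fin (Nn ν)), p ν s *
            ‖(Nn ν:ℝ)⁻¹ • ∑ k, vT e (Y ν k) (Y ν k)
              - (∑ k ∈ s, (π ν k)⁻¹)⁻¹ • ∑ k ∈ s, (π ν k)⁻¹ • vT e (Y ν k) (Y ν k)‖^2)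
          + 8*C^2 * (∑ s : Finset (Fin (Nn ν)), p ν s *
            ‖(Nn ν:ℝ)⁻¹ • ∑ k, Y ν k
              - (∑ k ∈ s, (π ν k)⁻¹)⁻¹ • ∑ k ∈ s, (π ν k)⁻¹ • Y ν k‖^2) := by
      rw [Finset.mul_sum, Finset.mul_sum, ← Finset.sum_add_distrib]
      refine Finset.sum_le_sum fun s _ => ?_
      by_cases hps : p ν s = 0
      · rw [hps]
        simp
      · rw [hQ s]
        set a := (Nn ν:ℝ)⁻¹ • ∑ k, vT e (Y ν k) (Y ν k)
          - (∑ k ∈ s, (π ν k)⁻¹)⁻¹ • ∑ k ∈ s, (π ν k)⁻¹ • vT e (Y ν k) (Y ν k) with ha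
        set b := vT e (μhat ν s) (μhat ν s) - vT e (μp ν) (μp ν) with hb
        have hμeq : (Nn ν:ℝ)⁻¹ • ∑ k, Y ν k
            - (∑ k ∈ s, (π ν k)⁻¹)⁻¹ • ∑ k ∈ s, (π ν k)⁻¹ • Y ν k = μp ν - μhat ν s := by
          rw [hμp, hμhat, hNhat]
        rw [hμeq]
        have h1 : ‖a + b‖^2 ≤ 2*‖a‖^2 + 2*‖b‖^2 := aux_norm_add_sq a b
        have hbdec : b = vT e (μhat ν s) (μhat ν s - μp ν)
            + vT e (μhat ν s - μp ν) (μp ν) := by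
          rw [hb, vT_sub_right, vT_sub_left]
          abel
        have h2 : ‖b‖ ≤ 2*C*‖μp ν - μhat ν s‖ := by
          rw [hbdec]
          refine le_trans (norm_add_le _ _) ?_
          rw [norm_vT, norm_vT, norm_sub_rev (μhat ν s) (μp ν)]
          have hmu := hμhnorm s hps
          calc ‖μhat ν s‖ * ‖μp ν - μhat ν s‖ + ‖μp ν - μhat ν s‖ * ‖μp ν‖
              ≤ C * ‖μp ν - μhat ν s‖ + ‖μp ν - μhat ν s‖ * C :=
                add_le_add (mul_le_mul_of_nonneg_right hmu (norm_nonneg _))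
                  (mul_le_mul_of_nonneg_left hμnorm (norm_nonneg _))
            _ = 2*C*‖μp ν - μhat ν s‖ := by ring
        have h2' : ‖b‖^2 ≤ 4*C^2*‖μp ν - μhat ν s‖^2 := by
          calc ‖b‖^2 ≤ (2*C*‖μp ν - μhat ν s‖)^2 := pow_le_pow_left₀ (norm_nonneg b) h2 2
            _ = 4*C^2*‖μp ν - μhat ν s‖^2 := by ring
        calc p ν s * ‖a + b‖^2 ≤ p ν s * (2*‖a‖^2 + 8*C^2*‖μp ν - μhat ν s‖^2) :=
              mul_le_mul_of_nonneg_left (by linarith only [h1, h2']) (hp0 ν s)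
          _ = 2*(p ν s*‖a‖^2) + 8*C^2*(p ν s*‖μp ν - μhat ν s‖^2) := by ring
    -- the two applications of the ratio bound
    have hRa := ratio_bound (fun k => vT e (Y ν k) (Y ν k)) (C^2) lam (CΔ/n ν)
      (by positivity) hlam hδ0 hunorm (p ν) (hp0 ν) (hp1 ν) (n ν) hn1 (hsize ν)
      (π ν) (hπ ν) (πd ν) (hπd ν) (hA3a ν) hδ
    have hRm := ratio_bound (Y ν) C lam (CΔ/n ν)
      hC0 hlam hδ0 (hA1 ν) (p ν) (hp0 ν) (hp1 ν) (n ν) hn1 (hsize ν)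
      (π ν) (hπ ν) (πd ν) (hπd ν) (hA3a ν) hδ
    beta_reduce at hRa
    clear hQ hdecomp
    set SA := ∑ s : Finset (Fin (Nn ν)), p ν s *
        ‖(Nn ν:ℝ)⁻¹ • ∑ k, vT e (Y ν k) (Y ν k)
          - (∑ k ∈ s, (π ν k)⁻¹)⁻¹ • ∑ k ∈ s, (π ν k)⁻¹ • vT e (Y ν k) (Y ν k)‖^2 with hSA
    set SM := ∑ s : Finset (Fin (Nn ν)), p ν s *
        ‖(Nn ν:ℝ)⁻¹ • ∑ k, Y ν k
          - (∑ k ∈ s, (π ν k)⁻¹)⁻¹ • ∑ k ∈ s, (π ν k)⁻¹ • Y ν k‖^2 with hSM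
    have hrK : (Nn ν:ℝ) ≤ K * n ν := hK ν hn1
    have hr0 : (0:ℝ) ≤ (Nn ν:ℝ)/(n ν:ℝ) := by positivity
    have hr1 : (Nn ν:ℝ)/(n ν:ℝ) ≤ K := (div_le_iff₀ hnR).mpr hrK
    have hr2 : ((Nn ν:ℝ)/(n ν:ℝ))^2 ≤ K^2 := pow_le_pow_left₀ hr0 hr1 2
    have heq : (n ν:ℝ) * (2 * (((n ν:ℝ)⁻¹)^2 *
          ((Nn ν:ℝ)*(4*(C^2)^2/lam + (Nn ν:ℝ)*(4*(C^2)^2*(CΔ/n ν)/lam^2))))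
        + 8*C^2*(((n ν:ℝ)⁻¹)^2 *
          ((Nn ν:ℝ)*(4*C^2/lam + (Nn ν:ℝ)*(4*C^2*(CΔ/n ν)/lam^2)))))
        = 40*C^4*((Nn ν:ℝ)/(n ν:ℝ))/lam + 40*C^4*CΔ*((Nn ν:ℝ)/(n ν:ℝ))^2/lam^2 := by
      have hne : (n ν:ℝ) ≠ 0 := ne_of_gt hnR
      have hlamne : lam ≠ 0 := ne_of_gt hlam
      field_simp
      ring
    have hfin1 : 40*C^4*((Nn ν:ℝ)/(n ν:ℝ))/lam ≤ 40*C^4*K/lam := by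
      have ha := mul_le_mul_of_nonneg_left hr1 (show (0:ℝ) ≤ 40*C^4/lam by positivity)
      have e1 : 40*C^4*((Nn ν:ℝ)/(n ν:ℝ))/lam = 40*C^4/lam*((Nn ν:ℝ)/(n ν:ℝ)) := by ring
      have e2 : 40*C^4*K/lam = 40*C^4/lam*K := by ring
      rw [e1, e2]; exact ha
    have hfin2 : 40*C^4*CΔ*((Nn ν:ℝ)/(n ν:ℝ))^2/lam^2 ≤ 40*C^4*CΔ*K^2/lam^2 := by
      have hb := mul_le_mul_of_nonneg_left hr2 (show (0:ℝ) ≤ 40*C^4*CΔ/lam^2 by positivity)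
      have e1 : 40*C^4*CΔ*((Nn ν:ℝ)/(n ν:ℝ))^2/lam^2
          = 40*C^4*CΔ/lam^2*(((Nn ν:ℝ)/(n ν:ℝ))^2) := by ring
      have e2 : 40*C^4*CΔ*K^2/lam^2 = 40*C^4*CΔ/lam^2*K^2 := by ring
      rw [e1, e2]; exact hb
    calc (n ν : ℝ) * ∑ s : Finset (Fin (Nn ν)), p ν s * hsNormSq e (Γp ν - Γhat ν s)
        ≤ (n ν : ℝ) * (2 * SA + 8*C^2 * SM) :=
          mul_le_mul_of_nonneg_left hsumineq (Nat.cast_nonneg _)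
      _ ≤ (n ν:ℝ) * (2 * (((n ν:ℝ)⁻¹)^2 *
            ((Nn ν:ℝ)*(4*(C^2)^2/lam + (Nn ν:ℝ)*(4*(C^2)^2*(CΔ/n ν)/lam^2))))
          + 8*C^2*(((n ν:ℝ)⁻¹)^2 *
            ((Nn ν:ℝ)*(4*C^2/lam + (Nn ν:ℝ)*(4*C^2*(CΔ/n ν)/lam^2))))) := by
          apply mul_le_mul_of_nonneg_left _ (Nat.cast_nonneg _)
          have h8 : (0:ℝ) ≤ 8*C^2 := by positivity
          have hm := mul_le_mul_of_nonneg_left hRm h8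
          linarith only [hRa, hm]
      _ = 40*C^4*((Nn ν:ℝ)/(n ν:ℝ))/lam + 40*C^4*CΔ*((Nn ν:ℝ)/(n ν:ℝ))^2/lam^2 := heq
      _ ≤ 40*C^4*K/lam + 40*C^4*CΔ*K^2/lam^2 := by linarith only [hfin1, hfin2]
end
end

section
/- Fix y ∈ H and define, for real h near 0, the perturbed covariance operator Γ(h) = (1/(N+h)) (∑_{k∈U} Y_k ⊗ Y_k + h·(y ⊗ y)) − μ(h) ⊗ μ(h) with μ(h) = (1/(N+h)) (∑_{k∈U} Y_k + h·y). Suppose (v_ℓ)_{ℓ∈L} is a Hilbert basis of H consisting of eigenvectors of Γ, Γ v_ℓ = λ_ℓ v_ℓ, containing v_j and such that λ_ℓ ≠ λ_j for every ℓ ≠ j. Suppose h ↦ λ(h) ∈ ℝ and h ↦ w(h) ∈ H are defined near 0 with λ(0) = λ_j, w(0) = v_j, ‖w(h)‖ = 1 and Γ(h) w(h) = λ(h) w(h) for all h near 0, and that both λ and w are differentiable at 0. Then w′(0) = (1/N) ∑_{ℓ≠j} (⟨y − μ, v_j⟩ ⟨y − μ, v_ℓ⟩ / (λ_j − λ_ℓ))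 v_ℓ; that is, the influence function of the eigenfunction v_j is Iv_j(M, y) = (1/N) ∑_{ℓ≠j} (⟨y − μ, v_j⟩ ⟨y − μ, v_ℓ⟩ / (λ_j − λ_ℓ)) v_ℓ. -/
open scoped RealInnerProductSpace
open Filter Topology

noncomputable section

/-- Let `(v_ℓ)_{ℓ∈L}` be a Hilbert basis of eigenvectors of `Γ` (`Γ v_ℓ = λ_ℓ v_ℓ`)
containing `v_j`, with `λ_ℓ ≠ λ_j` for `ℓ ≠ j`.  If `h ↦ λ(h)` and `h ↦ w(h)` satisfy
`λ(0) = λ_j`, `w(0) = v_j`, `‖w(h)‖ = 1` and `Γ(h) w(h) = λ(h) w(h)` for `h` near `0`, with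
`λ` and `w` differentiable at `0`, then
`w′(0) = (1/N) ∑_{ℓ≠j} (⟪y − μ, v_j⟫ ⟪y − μ, v_ℓ⟫/(λ_j − λ_ℓ)) v_ℓ`: this is the influence
function of the eigenfunction `v_j`. -/
theorem influence_function_of_eigenfunction
    {H : Type*} [NormedAddCommGroup H] [InnerProductSpace ℝ H] [CompleteSpace H]
    {L : Type*} [DecidableEq L]
    (N : ℕ) (hN : 0 < N) (Y : Fin N → H)
    (μ : H) (hμ : μ = (N : ℝ)⁻¹ • ∑ k, Y k)
    (Γ : H →L[ℝ] H) (hΓ : Γ = (N : ℝ)⁻¹ • ∑ k, tens (Y k - μ) (Y k - μ))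
    (y : H)
    (μf : ℝ → H) (hμf : ∀ h, μf h = ((N : ℝ) + h)⁻¹ • (∑ k, Y k + h • y))
    (Γf : ℝ → H →L[ℝ] H)
    (hΓf : ∀ h, Γf h = ((N : ℝ) + h)⁻¹ • (∑ k, tens (Y k) (Y k) + h • tens y y)
        - tens (μf h) (μf h))
    (v : HilbertBasis L ℝ H) (lam : L → ℝ)
    (heig : ∀ ℓ, Γ (v ℓ) = lam ℓ • v ℓ)
    (j : L) (hdistinct : ∀ ℓ, ℓ ≠ j → lam ℓ ≠ lam j)
    (lamF : ℝ → ℝ) (w : ℝ → H)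
    (hlam0 : lamF 0 = lam j) (hw0 : w 0 = v j)
    (hnear : ∀ᶠ h in 𝓝 (0 : ℝ), ‖w h‖ = 1 ∧ Γf h (w h) = lamF h • w h)
    (hlamdiff : DifferentiableAt ℝ lamF 0)
    (w' : H) (hw' : HasDerivAt w w' 0) :
    w' = (N : ℝ)⁻¹ • ∑' ℓ, (if ℓ = j then (0 : ℝ) else
        ⟪y - μ, v j⟫ * ⟪y - μ, v ℓ⟫ / (lam j - lam ℓ)) • v ℓ := by
  classical
  have hN' : (N : ℝ) ≠ 0 := Nat.cast_ne_zero.mpr hN.ne'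
  set S : H →L[ℝ] H := ∑ k, tens (Y k) (Y k) with hSdef
  set T : H := ∑ k, Y k with hTdef
  have htens : ∀ a b u : H, tens a b u = ⟪a, u⟫ • b := fun _ _ _ => rfl
  have hT : T = (N : ℝ) • μ := by
    rw [hμ, smul_smul, mul_inv_cancel₀ hN', one_smul]
  have hSu : ∀ u : H, S u = (N : ℝ) • Γ u + ((N : ℝ) * ⟪μ, u⟫) • μ := by
    intro u
    have key : (∑ k, tens (Y k - μ) (Y k - μ)) u
        = S u - ((N : ℝ) * ⟪μ, u⟫) • μ := by
      have e1 : ∀ k : Fin N, tens (Y k - μ) (Y k - μ) u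
          = tens (Y k) (Y k) u - ⟪Y k, u⟫ • μ - ⟪μ, u⟫ • Y k + ⟪μ, u⟫ • μ := by
        intro k
        show ⟪Y k - μ, u⟫ • (Y k - μ) = ⟪Y k, u⟫ • Y k - ⟪Y k, u⟫ • μ - ⟪μ, u⟫ • Y k + ⟪μ, u⟫ • μ
        rw [inner_sub_left, sub_smul, smul_sub, smul_sub]
        abel
      rw [ContinuousLinearMap.sum_apply, Finset.sum_congr rfl (fun k _ => e1 k)]
      rw [Finset.sum_add_distrib, Finset.sum_sub_distrib, Finset.sum_sub_distrib,
        ← Finset.sum_smul, ← sum_inner, ← Finset.smul_sum, ← hTdef, hT,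
        hSdef, ContinuousLinearMap.sum_apply, Finset.sum_const]
      simp only [real_inner_smul_left, Finset.card_univ, Fintype.card_fin, smul_smul]
      match_scalars <;> push_cast <;> ring
    rw [hΓ]
    simp only [ContinuousLinearMap.smul_apply, smul_smul, key, smul_sub,
      mul_inv_cancel₀ hN', one_smul, smul_add]
    match_scalars <;> field_simp <;> ring
  have hSsym : ∀ u z : H, ⟪S u, z⟫ = ⟪u, S z⟫ := by
    intro u z
    rw [hSdef]
    simp only [ContinuousLinearMap.sum_apply]
    rw [sum_inner, inner_sum]
    refine Finset.sum_congr rfl fun k _ => ?_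
    show ⟪⟪Y k, u⟫ • Y k, z⟫ = ⟪u, ⟪Y k, z⟫ • Y k⟫
    rw [real_inner_smul_left, real_inner_smul_right, real_inner_comm u (Y k)]
    ring
  have hortho : ∀ i k : L, ⟪v i, v k⟫ = if i = k then 1 else 0 :=
    orthonormal_iff_ite.mp v.orthonormal
  -- derivative of μf at 0
  have hμf0 : μf 0 = μ := by rw [hμf, hμ]; simp
  have hc : HasDerivAt (fun h : ℝ => ((N:ℝ)+h)⁻¹) (-1/((N:ℝ))^2) 0 := by
    have h1 : HasDerivAt (fun h : ℝ => (N:ℝ)+h) 1 0 := (hasDerivAt_id 0).const_add _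
    have := h1.fun_inv (by simpa using hN')
    simpa using this
  have hμ' : HasDerivAt μf ((N:ℝ)⁻¹ • (y - μ)) 0 := by
    have h2 : HasDerivAt (fun h : ℝ => T + h • y) y 0 := by
      simpa using ((hasDerivAt_id (0:ℝ)).smul_const y).const_add T
    have h3 := hc.fun_smul h2
    have h4 : μf = fun h : ℝ => ((N:ℝ)+h)⁻¹ • (T + h • y) := by
      funext h; rw [hμf]
    rw [h4]
    convert h3 using 1
    rw [hT]
    simp only [add_zero, zero_smul, smul_smul, smul_sub]
    have hh : (-1/(N:ℝ)^2 * (N:ℝ)) = -((N:ℝ))⁻¹ := by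
      field_simp
    rw [hh, neg_smul, sub_eq_add_neg]
  set lamF' := deriv lamF 0 with hl'def
  have hlam' : HasDerivAt lamF lamF' 0 := hlamdiff.hasDerivAt
  -- the function h ↦ Γf h (w h), explicitly
  have hFfun : (fun h => Γf h (w h)) = fun h =>
      ((N:ℝ)+h)⁻¹ • (S (w h) + h • (⟪y, w h⟫ • y)) - ⟪μf h, w h⟫ • μf h := by
    funext h
    rw [hΓf]
    simp [htens, ContinuousLinearMap.sub_apply, ContinuousLinearMap.smul_apply,
      ContinuousLinearMap.add_apply]
  have hg : HasDerivAt (fun h : ℝ => S (w h) + h • (⟪y, w h⟫ • y)) (S w' + ⟪y, v j⟫ • y) 0 := by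
    have d1 : HasDerivAt (fun h => S (w h)) (S w') 0 := S.hasFDerivAt.comp_hasDerivAt 0 hw'
    have d2 : HasDerivAt (fun h : ℝ => ⟪y, w h⟫) ⟪y, w'⟫ 0 := by
      simpa using (hasDerivAt_const (0:ℝ) y).inner ℝ hw'
    have d3 : HasDerivAt (fun h : ℝ => h • (⟪y, w h⟫ • y)) (⟪y, v j⟫ • y) 0 := by
      have := (hasDerivAt_id (0:ℝ)).fun_smul (d2.smul_const y)
      simpa [hw0] using this
    exact d1.add d3
  have hD1 : HasDerivAt (fun h : ℝ => ((N:ℝ)+h)⁻¹ • (S (w h) + h • (⟪y, w h⟫ • y)))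
      ((N:ℝ)⁻¹ • (S w' + ⟪y, v j⟫ • y) + (-1/(N:ℝ)^2) • S (v j)) 0 := by
    have := hc.fun_smul hg
    simpa [hw0] using this
  have hD2 : HasDerivAt (fun h : ℝ => ⟪μf h, w h⟫ • μf h)
      (⟪μ, v j⟫ • ((N:ℝ)⁻¹ • (y - μ)) + (⟪μ, w'⟫ + ⟪(N:ℝ)⁻¹ • (y - μ), v j⟫) • μ) 0 := by
    have := ((hμ'.inner ℝ hw').fun_smul hμ')
    simpa [hμf0, hw0] using this
  have hDF : HasDerivAt (fun h => Γf h (w h))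
      (((N:ℝ)⁻¹ • (S w' + ⟪y, v j⟫ • y) + (-1/(N:ℝ)^2) • S (v j))
        - (⟪μ, v j⟫ • ((N:ℝ)⁻¹ • (y - μ)) + (⟪μ, w'⟫ + ⟪(N:ℝ)⁻¹ • (y - μ), v j⟫) • μ)) 0 := by
    rw [hFfun]; exact hD1.sub hD2
  have hG : HasDerivAt (fun h => lamF h • w h) (lam j • w' + lamF' • v j) 0 := by
    have := hlam'.fun_smul hw'
    simpa [hw0, hlam0] using this
  have heq : (fun h => lamF h • w h) =ᶠ[𝓝 (0:ℝ)] (fun h => Γf h (w h)) :=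
    hnear.mono fun h hh => hh.2.symm
  have hDG : HasDerivAt (fun h => Γf h (w h)) (lam j • w' + lamF' • v j) 0 :=
    hG.congr_of_eventuallyEq heq.symm
  have Dvec : ((N:ℝ)⁻¹ • (S w' + ⟪y, v j⟫ • y) + (-1/(N:ℝ)^2) • S (v j))
        - (⟪μ, v j⟫ • ((N:ℝ)⁻¹ • (y - μ)) + (⟪μ, w'⟫ + ⟪(N:ℝ)⁻¹ • (y - μ), v j⟫) • μ)
      = lam j • w' + lamF' • v j := hDF.unique hDG
  -- the j-th coefficient vanishes
  have hcj : ⟪v j, w'⟫ = 0 := by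
    have hd0 : HasDerivAt (fun h => ⟪w h, w h⟫) (⟪v j, w'⟫ + ⟪w', v j⟫) 0 := by
      have := hw'.inner ℝ hw'
      simpa [hw0] using this
    have hnorm : (fun h => ⟪w h, w h⟫) =ᶠ[𝓝 (0:ℝ)] (fun _ => (1:ℝ)) :=
      hnear.mono fun h hh => by
        simp only [real_inner_self_eq_norm_sq, hh.1, one_pow]
    have hd0' : HasDerivAt (fun h => ⟪w h, w h⟫) 0 0 :=
      (hasDerivAt_const (0:ℝ) (1:ℝ)).congr_of_eventuallyEq hnorm
    have h1 := hd0.unique hd0'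
    have h2 := real_inner_comm w' (v j)
    linarith
  -- coefficients for ℓ ≠ j
  have hkey : ∀ ℓ, ⟪v ℓ, w'⟫ = (N:ℝ)⁻¹ * (if ℓ = j then (0:ℝ) else
      ⟪y - μ, v j⟫ * ⟪y - μ, v ℓ⟫ / (lam j - lam ℓ)) := by
    intro ℓ
    by_cases hℓ : ℓ = j
    · simp [hℓ, hcj]
    · simp only [hℓ, if_neg, if_false]
      have hvjℓ : ⟪v ℓ, v j⟫ = 0 := by rw [hortho]; simp [hℓ]
      have e1 : ⟪v ℓ, S w'⟫ = (N:ℝ) * lam ℓ * ⟪v ℓ, w'⟫ + (N:ℝ) * ⟪v ℓ, μ⟫ * ⟪μ, w'⟫ := by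
        rw [← hSsym, hSu (v ℓ), heig ℓ]
        simp only [inner_add_left, real_inner_smul_left]
        rw [real_inner_comm (v ℓ) μ]
        ring
      have e2 : ⟪v ℓ, S (v j)⟫ = (N:ℝ) * ⟪μ, v j⟫ * ⟪v ℓ, μ⟫ := by
        rw [hSu (v j), heig j]
        simp only [inner_add_right, real_inner_smul_right]
        rw [hvjℓ]
        ring
      have hvec := congrArg (fun z : H => ⟪v ℓ, z⟫) Dvec
      simp only [inner_add_right, inner_sub_right, real_inner_smul_right,
        real_inner_smul_left, inner_sub_left, inner_add_left] at hvec
      rw [e1, e2, hvjℓ] at hvec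
      simp only [inner_sub_left]
      rw [real_inner_comm (v ℓ) y, real_inner_comm (v ℓ) μ]
      have hne : lam j - lam ℓ ≠ 0 := sub_ne_zero.mpr (Ne.symm (hdistinct ℓ hℓ))
      field_simp at hvec ⊢
      refine mul_left_cancel₀ (pow_ne_zero 3 hN') ?_
      linear_combination -(N:ℝ)^3 * hvec
  -- assemble via the Hilbert basis expansion
  have hrepr := v.hasSum_repr w'
  have hrepr' : HasSum (fun ℓ => ((N:ℝ)⁻¹ * (if ℓ = j then (0:ℝ) else
      ⟪y - μ, v j⟫ * ⟪y - μ, v ℓ⟫ / (lam j - lam ℓ))) • v ℓ) w' := by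
    convert hrepr using 2 with ℓ
    rw [v.repr_apply_apply, hkey ℓ]
  have hsum : HasSum (fun ℓ => (if ℓ = j then (0:ℝ) else
      ⟪y - μ, v j⟫ * ⟪y - μ, v ℓ⟫ / (lam j - lam ℓ)) • v ℓ) ((N:ℝ) • w') := by
    have := hrepr'.const_smul (N:ℝ)
    convert this using 2 with ℓ
    rw [smul_smul, ← mul_assoc, mul_inv_cancel₀ hN', one_mul]
  rw [hsum.tsum_eq, smul_smul, inv_mul_cancel₀ hN', one_smul]
end
end

section
/- Let s ⊆ U be a nonempty sample, N̂ = ∑_{k∈s} 1/π_k, μ̂ = (1/N̂) ∑_{k∈s} Y_k/π_k and Γ̂ = (1/N̂) ∑_{k∈s} (Y_k ⊗ Y_k)/π_k − μ̂ ⊗ μ̂. Then the remainder of the first-order von Mises expansion of the covariance functional satisfies the exact identity Γ̂ − Γ − (1/N) ∑_{k∈s} (1/π_k) ((Y_k − μ) ⊗ (Y_k − μ) − Γ) = (N̂/N − 1) (Γ − Γ̂) − (N̂/N) (μ − μ̂) ⊗ (μ − μ̂). -/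
open scoped RealInnerProductSpace

noncomputable section

section aux

variable {H : Type*} [NormedAddCommGroup H] [InnerProductSpace ℝ H]

lemma tens_sub_left (a b c : H) : tens (a - b) c = tens a c - tens b c := by
  ext u; simp [tens, inner_sub_left, sub_smul]

lemma tens_sub_right (a b c : H) : tens a (b - c) = tens a b - tens a c := by
  ext u; simp [tens, smul_sub]

lemma tens_smul_left (r : ℝ) (a b : H) : tens (r • a) b = r • tens a b := by
  ext u; simp [tens, real_inner_smul_left, smul_smul]

lemma tens_smul_right (r : ℝ) (a b : H) : tens a (r • b) = r • tens a b := by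
  ext u; simp [tens, smul_smul, mul_comm]

lemma tens_sum_right {ι : Type*} (t : Finset ι) (a : H) (f : ι → H) :
    tens a (∑ i ∈ t, f i) = ∑ i ∈ t, tens a (f i) := by
  ext u; simp [tens, Finset.smul_sum]

lemma tens_sum_left {ι : Type*} (t : Finset ι) (f : ι → H) (b : H) :
    tens (∑ i ∈ t, f i) b = ∑ i ∈ t, tens (f i) b := by
  ext u; simp [tens, sum_inner, Finset.sum_smul]

end aux

/-- For a nonempty sample `s ⊆ U`, with `N̂ = ∑_{k∈s} 1/π_k`,
`μ̂ = (1/N̂) ∑_{k∈s} Y_k/π_k` and `Γ̂ = (1/N̂) ∑_{k∈s} (Y_k ⊗ Y_k)/π_k − μ̂ ⊗ μ̂`, the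
remainder of the first-order von Mises expansion of the covariance functional satisfies the
exact identity
`Γ̂ − Γ − (1/N) ∑_{k∈s} (1/π_k)((Y_k − μ) ⊗ (Y_k − μ) − Γ)
  = (N̂/N − 1)(Γ − Γ̂) − (N̂/N)(μ − μ̂) ⊗ (μ − μ̂)`. -/
theorem von_mises_remainder_identity_for_covariance
    {H : Type*} [NormedAddCommGroup H] [InnerProductSpace ℝ H] [CompleteSpace H]
    (N : ℕ) (hN : 0 < N) (Y : Fin N → H)
    (π : Fin N → ℝ) (hπpos : ∀ k, 0 < π k)
    (s : Finset (Fin N)) (hs : s.Nonempty)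
    (μ : H) (hμ : μ = (N : ℝ)⁻¹ • ∑ k, Y k)
    (Γ : H →L[ℝ] H) (hΓ : Γ = (N : ℝ)⁻¹ • ∑ k, tens (Y k - μ) (Y k - μ))
    (Nhat : ℝ) (hNhat : Nhat = ∑ k ∈ s, (π k)⁻¹)
    (μhat : H) (hμhat : μhat = Nhat⁻¹ • ∑ k ∈ s, (π k)⁻¹ • Y k)
    (Γhat : H →L[ℝ] H)
    (hΓhat : Γhat = Nhat⁻¹ • (∑ k ∈ s, (π k)⁻¹ • tens (Y k) (Y k)) - tens μhat μhat) :
    Γhat - Γ - (N : ℝ)⁻¹ • ∑ k ∈ s, (π k)⁻¹ • (tens (Y k - μ) (Y k - μ) - Γ)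
      = (Nhat / (N : ℝ) - 1) • (Γ - Γhat)
        - (Nhat / (N : ℝ)) • tens (μ - μhat) (μ - μhat) := by
  have hNhatpos : 0 < Nhat := by
    rw [hNhat]
    exact Finset.sum_pos (fun k _ => inv_pos.2 (hπpos k)) hs
  have hNhatne : Nhat ≠ 0 := ne_of_gt hNhatpos
  have hv : ∑ k ∈ s, (π k)⁻¹ • Y k = Nhat • μhat := by
    rw [hμhat, smul_smul, mul_inv_cancel₀ hNhatne, one_smul]
  have hS2 : ∑ k ∈ s, (π k)⁻¹ • tens (Y k) (Y k)
      = Nhat • (Γhat + tens μhat μhat) := by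
    rw [hΓhat, sub_add_cancel, smul_smul, mul_inv_cancel₀ hNhatne, one_smul]
  have e1 : ∀ k ∈ s, (π k)⁻¹ • (tens (Y k - μ) (Y k - μ) - Γ)
      = (π k)⁻¹ • tens (Y k) (Y k) - tens μ ((π k)⁻¹ • Y k)
        - tens ((π k)⁻¹ • Y k) μ + (π k)⁻¹ • tens μ μ - (π k)⁻¹ • Γ := by
    intro k _
    rw [tens_sub_left, tens_sub_right, tens_sub_right, tens_smul_right, tens_smul_left]
    module
  have hsum : ∑ k ∈ s, (π k)⁻¹ • (tens (Y k - μ) (Y k - μ) - Γ)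
      = Nhat • (Γhat + tens μhat μhat) - Nhat • tens μ μhat
        - Nhat • tens μhat μ + Nhat • tens μ μ - Nhat • Γ := by
    rw [Finset.sum_congr rfl e1]
    rw [Finset.sum_sub_distrib, Finset.sum_add_distrib, Finset.sum_sub_distrib,
      Finset.sum_sub_distrib, ← tens_sum_right, ← tens_sum_left, hv, hS2,
      tens_smul_right, tens_smul_left, ← Finset.sum_smul, ← Finset.sum_smul, ← hNhat]
  rw [hsum, tens_sub_left, tens_sub_right, tens_sub_right, div_eq_mul_inv]
  module
end
end

section
/- Under assumptions (A1), (A2) and (A3), the remainder of the first-order von Mises expansion of the mean functional, R_{μ,ν} := μ̂_ν − μ_ν − (1/N_ν) ∑_{k∈s_ν} (Y_{k,ν} − μ_ν)/π_{k,ν}, is o_p(n_ν^{−1/2}): for every ε > 0, p_ν(√(n_ν) ‖R_{μ,ν}‖ > ε) → 0 as ν → ∞. Equivalently, μ̂_ν − μ_ν = ∑_{k∈U_ν} u_{k,ν} (I_k/π_{k,ν} − 1) + o_p(n_ν^{−1/2}) with linearized variable u_{k,ν} = (Y_{k,ν} − μ_ν)/N_ν. -/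
open scoped RealInnerProductSpace
open Filter Topology

noncomputable section

lemma aux_second_moment {F : Type*} [Fintype F] [DecidableEq F]
    {H : Type*} [NormedAddCommGroup H] [InnerProductSpace ℝ H]
    (p : Finset F → ℝ) (hp0 : ∀ s, 0 ≤ p s) (hp1 : ∑ s : Finset F, p s = 1)
    (pi1 : F → ℝ) (hπ : ∀ k, pi1 k = ∑ s : Finset F, (if k ∈ s then p s else 0))
    (pi2 : F → F → ℝ)
    (hπd : ∀ k l, pi2 k l = ∑ s : Finset F, (if k ∈ s ∧ l ∈ s then p s else 0))
    (lam : ℝ) (hlam : 0 < lam) (hA3a : ∀ k, lam ≤ pi1 k)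
    (u : F → H) (B : ℝ) (hB : ∀ k, ‖u k‖ ≤ B) (hB0 : 0 ≤ B)
    (δ : ℝ) (hδ : 0 ≤ δ) (hΔ : ∀ k l, k ≠ l → |pi2 k l - pi1 k * pi1 l| ≤ δ) :
    ∑ s : Finset F, p s * ‖∑ k : F, ((if k ∈ s then (pi1 k)⁻¹ else 0) - 1) • u k‖ ^ 2
      ≤ B ^ 2 * ((Fintype.card F : ℝ) / lam + (Fintype.card F : ℝ) ^ 2 * δ / lam ^ 2) := by
  have hpos : ∀ k, 0 < pi1 k := fun k => lt_of_lt_of_le hlam (hA3a k)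
  have hle1 : ∀ k, pi1 k ≤ 1 := by
    intro k
    rw [hπ k, ← hp1]
    refine Finset.sum_le_sum fun s _ => ?_
    split_ifs <;> simp [hp0 s]
  set e : F → Finset F → ℝ := fun k s => (if k ∈ s then (pi1 k)⁻¹ else 0) - 1 with he
  have hA : ∀ k, ∑ s : Finset F, p s * (if k ∈ s then (pi1 k)⁻¹ else 0) = 1 := by
    intro k
    have h1 : ∀ s : Finset F, p s * (if k ∈ s then (pi1 k)⁻¹ else 0)
        = (pi1 k)⁻¹ * (if k ∈ s then p s else 0) := by
      intro s; split_ifs <;> ring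
    rw [Finset.sum_congr rfl fun s _ => h1 s, ← Finset.mul_sum, ← hπ,
      inv_mul_cancel₀ (hpos k).ne']
  have hAB : ∀ k l, ∑ s : Finset F,
      p s * ((if k ∈ s then (pi1 k)⁻¹ else 0) * (if l ∈ s then (pi1 l)⁻¹ else 0))
      = pi2 k l / (pi1 k * pi1 l) := by
    intro k l
    have h1 : ∀ s : Finset F,
        p s * ((if k ∈ s then (pi1 k)⁻¹ else 0) * (if l ∈ s then (pi1 l)⁻¹ else 0))
        = (pi1 k * pi1 l)⁻¹ * (if k ∈ s ∧ l ∈ s then p s else 0) := by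
      intro s
      by_cases hk : k ∈ s <;> by_cases hl : l ∈ s <;> simp [hk, hl, mul_inv] <;> ring
    rw [Finset.sum_congr rfl fun s _ => h1 s, ← Finset.mul_sum, ← hπd, div_eq_inv_mul]
  have cov : ∀ k l, ∑ s : Finset F, p s * (e k s * e l s)
      = (pi2 k l - pi1 k * pi1 l) / (pi1 k * pi1 l) := by
    intro k l
    have hexp : ∀ s : Finset F, p s * (e k s * e l s)
        = p s * ((if k ∈ s then (pi1 k)⁻¹ else 0) * (if l ∈ s then (pi1 l)⁻¹ else 0))
          - p s * (if k ∈ s then (pi1 k)⁻¹ else 0)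
          - p s * (if l ∈ s then (pi1 l)⁻¹ else 0) + p s := by
      intro s; simp only [he]; ring
    rw [Finset.sum_congr rfl fun s _ => hexp s]
    rw [Finset.sum_add_distrib, Finset.sum_sub_distrib, Finset.sum_sub_distrib,
      hAB, hA, hA, hp1]
    have hne : pi1 k * pi1 l ≠ 0 := (mul_pos (hpos k) (hpos l)).ne'
    field_simp
    rw [sub_div, div_self hne]; ring
  have hsq : ∀ s : Finset F, ‖∑ k : F, e k s • u k‖ ^ 2
      = ∑ k : F, ∑ l : F, (e k s * e l s) * ⟪u k, u l⟫ := by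
    intro s
    rw [← real_inner_self_eq_norm_sq, sum_inner]
    refine Finset.sum_congr rfl fun k _ => ?_
    rw [inner_sum]
    refine Finset.sum_congr rfl fun l _ => ?_
    rw [real_inner_smul_left, real_inner_smul_right]; ring
  have key : ∑ s : Finset F, p s * ‖∑ k : F, e k s • u k‖ ^ 2
      = ∑ k : F, ∑ l : F, ((pi2 k l - pi1 k * pi1 l) / (pi1 k * pi1 l)) * ⟪u k, u l⟫ := by
    calc ∑ s : Finset F, p s * ‖∑ k : F, e k s • u k‖ ^ 2
        = ∑ s : Finset F, ∑ k : F, ∑ l : F, p s * ((e k s * e l s) * ⟪u k, u l⟫) := by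
          refine Finset.sum_congr rfl fun s _ => ?_
          rw [hsq s, Finset.mul_sum]
          exact Finset.sum_congr rfl fun k _ => Finset.mul_sum _ _ _
      _ = ∑ k : F, ∑ l : F, ∑ s : Finset F, p s * ((e k s * e l s) * ⟪u k, u l⟫) := by
          rw [Finset.sum_comm]
          exact Finset.sum_congr rfl fun k _ => Finset.sum_comm
      _ = ∑ k : F, ∑ l : F, ((pi2 k l - pi1 k * pi1 l) / (pi1 k * pi1 l)) * ⟪u k, u l⟫ := by
          refine Finset.sum_congr rfl fun k _ => Finset.sum_congr rfl fun l _ => ?_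
          rw [← cov k l, Finset.sum_mul]
          exact Finset.sum_congr rfl fun s _ => by ring
  rw [key]
  have hBnn : ∀ k l : F, |⟪u k, u l⟫| ≤ B ^ 2 := by
    intro k l
    calc |⟪u k, u l⟫| ≤ ‖u k‖ * ‖u l‖ := abs_real_inner_le_norm _ _
      _ ≤ B * B := mul_le_mul (hB k) (hB l) (norm_nonneg _) hB0
      _ = B ^ 2 := (sq B).symm
  have hterm : ∀ k l : F, ((pi2 k l - pi1 k * pi1 l) / (pi1 k * pi1 l)) * ⟪u k, u l⟫
      ≤ (if k = l then B ^ 2 / lam else 0) + B ^ 2 * δ / lam ^ 2 := by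
    intro k l
    have habs : |(pi2 k l - pi1 k * pi1 l) / (pi1 k * pi1 l)|
        ≤ (if k = l then lam⁻¹ else δ / lam ^ 2) := by
      by_cases hkl : k = l
      · subst hkl
        have hdiag : pi2 k k = pi1 k := by
          rw [hπd, hπ]; exact Finset.sum_congr rfl fun s _ => by simp
        rw [hdiag, if_pos rfl]
        have h1 : (pi1 k - pi1 k * pi1 k) / (pi1 k * pi1 k) = (1 - pi1 k) / pi1 k := by
          rw [div_eq_div_iff (mul_pos (hpos k) (hpos k)).ne' (hpos k).ne']
          ring
        rw [h1, abs_of_nonneg (div_nonneg (by linarith [hle1 k]) (hpos k).le)]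
        calc (1 - pi1 k) / pi1 k ≤ 1 / lam :=
              div_le_div₀ zero_le_one (by linarith [hpos k]) hlam (hA3a k)
          _ = lam⁻¹ := one_div lam
      · rw [if_neg hkl, abs_div, abs_of_pos (mul_pos (hpos k) (hpos l))]
        refine div_le_div₀ hδ (hΔ k l hkl) (by positivity) ?_
        calc lam ^ 2 = lam * lam := sq lam
          _ ≤ pi1 k * pi1 l := mul_le_mul (hA3a k) (hA3a l) hlam.le (hpos k).le
    have hbnd0 : (0:ℝ) ≤ (if k = l then lam⁻¹ else δ / lam ^ 2) := by
      split_ifs <;> positivity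
    calc ((pi2 k l - pi1 k * pi1 l) / (pi1 k * pi1 l)) * ⟪u k, u l⟫
        ≤ |((pi2 k l - pi1 k * pi1 l) / (pi1 k * pi1 l)) * ⟪u k, u l⟫| := le_abs_self _
      _ = |(pi2 k l - pi1 k * pi1 l) / (pi1 k * pi1 l)| * |⟪u k, u l⟫| := abs_mul _ _
      _ ≤ (if k = l then lam⁻¹ else δ / lam ^ 2) * B ^ 2 :=
          mul_le_mul habs (hBnn k l) (abs_nonneg _) hbnd0
      _ ≤ (if k = l then B ^ 2 / lam else 0) + B ^ 2 * δ / lam ^ 2 := by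
          split_ifs with h
          · have h2 : (0:ℝ) ≤ B ^ 2 * δ / lam ^ 2 := by positivity
            have h3 : lam⁻¹ * B ^ 2 = B ^ 2 / lam := by ring
            linarith
          · apply le_of_eq; ring
  calc ∑ k : F, ∑ l : F, ((pi2 k l - pi1 k * pi1 l) / (pi1 k * pi1 l)) * ⟪u k, u l⟫
      ≤ ∑ k : F, ∑ l : F, ((if k = l then B ^ 2 / lam else 0) + B ^ 2 * δ / lam ^ 2) :=
        Finset.sum_le_sum fun k _ => Finset.sum_le_sum fun l _ => hterm k l
    _ = B ^ 2 * ((Fintype.card F : ℝ) / lam + (Fintype.card F : ℝ) ^ 2 * δ / lam ^ 2) := by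
        simp [Finset.sum_add_distrib, Finset.sum_ite_eq, Finset.card_univ, Finset.mul_sum]
        ring

set_option maxHeartbeats 1000000 in
/-- Under (A1), (A2), (A3), the remainder of the first-order von Mises expansion of the mean
functional, `R_{μ,ν} = μ̂_ν − μ_ν − (1/N_ν) ∑_{k∈s_ν} (Y_{k,ν} − μ_ν)/π_{k,ν}`, is
`o_p(n_ν^{−1/2})`: for every `ε > 0`, `p_ν(√(n_ν) ‖R_{μ,ν}‖ > ε) → 0` as `ν → ∞`. -/
theorem mean_functional_remainder_negligible
    {H : Type*} [NormedAddCommGroup H] [InnerProductSpace ℝ H] [CompleteSpace H]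
    (Nn n : ℕ → ℕ) (hNpos : ∀ ν, 0 < Nn ν) (hNmono : StrictMono Nn)
    (hn : Tendsto n atTop atTop)
    (Y : (ν : ℕ) → Fin (Nn ν) → H)
    (p : (ν : ℕ) → Finset (Fin (Nn ν)) → ℝ)
    (hp0 : ∀ ν s, 0 ≤ p ν s)
    (hp1 : ∀ ν, ∑ s : Finset (Fin (Nn ν)), p ν s = 1)
    (hsize : ∀ ν s, p ν s ≠ 0 → s.card = n ν)
    (π : (ν : ℕ) → Fin (Nn ν) → ℝ)
    (hπ : ∀ ν k, π ν k = ∑ s : Finset (Fin (Nn ν)), (if k ∈ s then p ν s else 0))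
    (πd : (ν : ℕ) → Fin (Nn ν) → Fin (Nn ν) → ℝ)
    (hπd : ∀ ν k l, πd ν k l = ∑ s : Finset (Fin (Nn ν)), (if k ∈ s ∧ l ∈ s then p ν s else 0))
    -- (A1)
    (C : ℝ) (hA1 : ∀ ν k, ‖Y ν k‖ ≤ C)
    -- (A2)
    (π₀ : ℝ) (hπ₀ : π₀ ∈ Set.Ioo (0 : ℝ) 1)
    (hA2 : Tendsto (fun ν => (n ν : ℝ) / (Nn ν : ℝ)) atTop (𝓝 π₀))
    -- (A3)
    (lam lamStar : ℝ) (hlam : 0 < lam) (hlamStar : 0 < lamStar)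
    (hA3a : ∀ ν k, lam ≤ π ν k)
    (hA3b : ∀ ν k l, k ≠ l → lamStar ≤ πd ν k l)
    (CΔ : ℝ)
    (hA3c : ∀ ν (k l : Fin (Nn ν)), k ≠ l → (n ν : ℝ) * |πd ν k l - π ν k * π ν l| ≤ CΔ)
    -- estimators and the von Mises remainder
    (Nhat : (ν : ℕ) → Finset (Fin (Nn ν)) → ℝ)
    (hNhat : ∀ ν s, Nhat ν s = ∑ k ∈ s, (π ν k)⁻¹)
    (μp : (ν : ℕ) → H) (hμp : ∀ ν, μp ν = (Nn ν : ℝ)⁻¹ • ∑ k, Y ν k)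
    (μhat : (ν : ℕ) → Finset (Fin (Nn ν)) → H)
    (hμhat : ∀ ν s, μhat ν s = (Nhat ν s)⁻¹ • ∑ k ∈ s, (π ν k)⁻¹ • Y ν k)
    (R : (ν : ℕ) → Finset (Fin (Nn ν)) → H)
    (hR : ∀ ν s, R ν s = μhat ν s - μp ν
        - (Nn ν : ℝ)⁻¹ • ∑ k ∈ s, (π ν k)⁻¹ • (Y ν k - μp ν)) :
    ∀ ε : ℝ, 0 < ε →
      Tendsto (fun ν => ∑ s : Finset (Fin (Nn ν)),
          (if ε < Real.sqrt (n ν) * ‖R ν s‖ then p ν s else 0))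
        atTop (𝓝 0) := by
  intro ε hε
  have hC0 : 0 ≤ C := le_trans (norm_nonneg (Y 0 ⟨0, hNpos 0⟩)) (hA1 0 _)
  set Cm : ℝ := max CΔ 0 with hCm
  have hCm0 : 0 ≤ Cm := le_max_right _ _
  set g : ℕ → ℝ := fun ν => (ε⁻¹ * (2 * C)) *
      ((Real.sqrt (n ν))⁻¹ * (lam⁻¹ + ((Nn ν : ℝ) / (n ν : ℝ)) * (Cm / lam ^ 2))) with hg
  have hg0 : ∀ ν, 0 ≤ g ν := by
    intro ν
    refine mul_nonneg (mul_nonneg (inv_nonneg.mpr hε.le) (by linarith)) ?_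
    refine mul_nonneg (inv_nonneg.mpr (Real.sqrt_nonneg _)) ?_
    refine add_nonneg (inv_nonneg.mpr hlam.le) ?_
    exact mul_nonneg (div_nonneg (Nat.cast_nonneg _) (Nat.cast_nonneg _))
      (div_nonneg hCm0 (by positivity))
  have hkey : ∀ ν, (∑ s : Finset (Fin (Nn ν)),
      (if ε < Real.sqrt (n ν) * ‖R ν s‖ then p ν s else 0)) ≤ g ν := by
    intro ν
    by_cases hn0 : n ν = 0
    · have hz : ∀ s : Finset (Fin (Nn ν)), ¬ (ε < Real.sqrt (n ν) * ‖R ν s‖) := by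
        intro s
        rw [hn0]
        simp only [Nat.cast_zero, Real.sqrt_zero, zero_mul, not_lt]
        exact hε.le
      rw [Finset.sum_eq_zero fun s _ => if_neg (hz s)]
      exact hg0 ν
    -- main case
    have hn1 : 1 ≤ n ν := Nat.one_le_iff_ne_zero.mpr hn0
    have hnr1 : (1:ℝ) ≤ (n ν : ℝ) := by exact_mod_cast hn1
    have hnr : (0:ℝ) < (n ν : ℝ) := by linarith
    have hNr : (0:ℝ) < (Nn ν : ℝ) := by exact_mod_cast hNpos ν
    have hπpos : ∀ k, 0 < π ν k := fun k => lt_of_lt_of_le hlam (hA3a ν k)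
    have hπle1 : ∀ k, π ν k ≤ 1 := by
      intro k
      rw [hπ ν k, ← hp1 ν]
      refine Finset.sum_le_sum fun s _ => ?_
      split_ifs <;> simp [hp0 ν s]
    set δ : ℝ := Cm / (n ν : ℝ) with hδdef
    have hδ0 : 0 ≤ δ := div_nonneg hCm0 hnr.le
    have hΔ : ∀ k l : Fin (Nn ν), k ≠ l → |πd ν k l - π ν k * π ν l| ≤ δ := by
      intro k l hkl
      rw [hδdef, le_div_iff₀ hnr]
      rw [mul_comm]
      exact le_trans (hA3c ν k l hkl) (le_max_left _ _)
    -- norm bounds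
    have hYsum : ‖∑ k, Y ν k‖ ≤ (Nn ν : ℝ) * C := by
      calc ‖∑ k, Y ν k‖ ≤ ∑ k, ‖Y ν k‖ := norm_sum_le _ _
        _ ≤ ∑ _k : Fin (Nn ν), C := Finset.sum_le_sum fun k _ => hA1 ν k
        _ = (Nn ν : ℝ) * C := by
            rw [Finset.sum_const, Finset.card_univ, Fintype.card_fin, nsmul_eq_mul]
    have hμn : ‖μp ν‖ ≤ C := by
      rw [hμp, norm_smul, norm_inv, Real.norm_natCast]
      calc ((Nn ν : ℝ))⁻¹ * ‖∑ k, Y ν k‖ ≤ ((Nn ν : ℝ))⁻¹ * ((Nn ν : ℝ) * C) :=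
            mul_le_mul_of_nonneg_left hYsum (by positivity)
        _ = C := by field_simp
    have hBu : ∀ k, ‖Y ν k - μp ν‖ ≤ 2 * C := by
      intro k
      calc ‖Y ν k - μp ν‖ ≤ ‖Y ν k‖ + ‖μp ν‖ := norm_sub_le _ _
        _ ≤ 2 * C := by linarith [hA1 ν k]
    -- second moments via the auxiliary lemma
    have hT := aux_second_moment (p ν) (hp0 ν) (hp1 ν) (π ν) (hπ ν) (πd ν) (hπd ν)
      lam hlam (hA3a ν) (fun k => Y ν k - μp ν) (2 * C) hBu (by positivity) δ hδ0 hΔ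
    have hD := aux_second_moment (p ν) (hp0 ν) (hp1 ν) (π ν) (hπ ν) (πd ν) (hπd ν)
      lam hlam (hA3a ν) (fun _ => (1:ℝ)) 1 (by intro k; simp) zero_le_one δ hδ0 hΔ
    set A : ℝ := (Nn ν : ℝ) / lam + (Nn ν : ℝ) ^ 2 * δ / lam ^ 2 with hAdef
    have hA0 : 0 ≤ A := by
      rw [hAdef]
      positivity
    rw [Fintype.card_fin] at hT hD
    set Ts : Finset (Fin (Nn ν)) → H :=
      fun s => ∑ k, ((if k ∈ s then (π ν k)⁻¹ else 0) - 1) • (Y ν k - μp ν) with hTsdef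
    set Ds : Finset (Fin (Nn ν)) → ℝ :=
      fun s => ∑ k, ((if k ∈ s then (π ν k)⁻¹ else 0) - 1) with hDsdef
    have hT' : ∑ s : Finset (Fin (Nn ν)), p ν s * ‖Ts s‖ ^ 2 ≤ (2 * C) ^ 2 * A := by
      calc ∑ s : Finset (Fin (Nn ν)), p ν s * ‖Ts s‖ ^ 2
          ≤ (2*C) ^ 2 * ((Nn ν : ℝ) / lam + (Nn ν : ℝ) ^ 2 * δ / lam ^ 2) := hT
        _ = (2 * C) ^ 2 * A := by rw [hAdef]
    have hD' : ∑ s : Finset (Fin (Nn ν)), p ν s * (Ds s) ^ 2 ≤ A := by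
      have heq : ∀ s : Finset (Fin (Nn ν)),
          p ν s * ‖∑ k, ((if k ∈ s then (π ν k)⁻¹ else 0) - 1) • (1:ℝ)‖ ^ 2
          = p ν s * (Ds s) ^ 2 := by
        intro s
        congr 1
        rw [hDsdef]
        simp only [smul_eq_mul, mul_one, Real.norm_eq_abs, sq_abs]
      rw [Finset.sum_congr rfl fun s _ => (heq s).symm]
      calc ∑ s : Finset (Fin (Nn ν)),
            p ν s * ‖∑ k, ((if k ∈ s then (π ν k)⁻¹ else 0) - 1) • (1:ℝ)‖ ^ 2
          ≤ 1 ^ 2 * ((Nn ν : ℝ) / lam + (Nn ν : ℝ) ^ 2 * δ / lam ^ 2) := hD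
        _ = A := by rw [hAdef]; ring
    -- pointwise bound on the remainder
    have hsum_u : ∑ k, (Y ν k - μp ν) = 0 := by
      have hNs : (Nn ν) • μp ν = ∑ k, Y ν k := by
        rw [← Nat.cast_smul_eq_nsmul ℝ, hμp, smul_smul, mul_inv_cancel₀ hNr.ne', one_smul]
      rw [Finset.sum_sub_distrib, Finset.sum_const, Finset.card_univ, Fintype.card_fin, hNs,
        sub_self]
    have hRb : ∀ s, p ν s ≠ 0 → Real.sqrt (n ν) * ‖R ν s‖
        ≤ (Real.sqrt (n ν) / ((n ν : ℝ) * (Nn ν : ℝ))) * (|Ds s| * ‖Ts s‖) := by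
      intro s hps
      have hTs_restrict : Ts s = ∑ k ∈ s, (π ν k)⁻¹ • (Y ν k - μp ν) := by
        simp only [hTsdef]
        simp only [sub_smul, one_smul]
        rw [Finset.sum_sub_distrib, hsum_u, sub_zero]
        simp only [ite_smul, zero_smul]
        rw [Finset.sum_ite_mem, Finset.univ_inter]
      have hDs_eq : Ds s = Nhat ν s - (Nn ν : ℝ) := by
        simp only [hDsdef]
        rw [Finset.sum_sub_distrib, Finset.sum_const, Finset.card_univ, Fintype.card_fin,
          Finset.sum_ite_mem, Finset.univ_inter, ← hNhat, nsmul_eq_mul, mul_one]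
      have hNhat_ge : (n ν : ℝ) ≤ Nhat ν s := by
        rw [hNhat]
        calc (n ν : ℝ) = ∑ _k ∈ s, (1:ℝ) := by
              rw [Finset.sum_const, hsize ν s hps, nsmul_eq_mul, mul_one]
          _ ≤ ∑ k ∈ s, (π ν k)⁻¹ := by
              refine Finset.sum_le_sum fun k _ => ?_
              rw [← inv_one]
              exact inv_anti₀ (hπpos k) (hπle1 k)
      have hNhat_pos : 0 < Nhat ν s := lt_of_lt_of_le hnr hNhat_ge
      have hμhat_sub : μhat ν s - μp ν = (Nhat ν s)⁻¹ • Ts s := by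
        have h2 : Ts s = (∑ k ∈ s, (π ν k)⁻¹ • Y ν k) - (Nhat ν s) • μp ν := by
          rw [hTs_restrict]
          simp only [smul_sub]
          rw [Finset.sum_sub_distrib, ← Finset.sum_smul, ← hNhat]
        rw [h2, smul_sub, ← hμhat, smul_smul, inv_mul_cancel₀ hNhat_pos.ne', one_smul]
      have hR_eq : R ν s = ((Nhat ν s)⁻¹ - ((Nn ν : ℝ))⁻¹) • Ts s := by
        rw [hR ν s, ← hTs_restrict, sub_smul, ← hμhat_sub]
      have habs2 : |(Nhat ν s)⁻¹ - ((Nn ν : ℝ))⁻¹|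
          ≤ |Ds s| / ((n ν : ℝ) * (Nn ν : ℝ)) := by
        have h3 : (Nhat ν s)⁻¹ - ((Nn ν : ℝ))⁻¹ = -(Ds s) / (Nhat ν s * (Nn ν : ℝ)) := by
          rw [hDs_eq]
          field_simp
          ring
        rw [h3, abs_div, abs_neg, abs_of_pos (mul_pos hNhat_pos hNr)]
        refine div_le_div_of_nonneg_left (abs_nonneg _) (by positivity) ?_
        exact mul_le_mul_of_nonneg_right hNhat_ge hNr.le
      calc Real.sqrt (n ν) * ‖R ν s‖
          = Real.sqrt (n ν) * (|(Nhat ν s)⁻¹ - ((Nn ν : ℝ))⁻¹| * ‖Ts s‖) := by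
            rw [hR_eq, norm_smul, Real.norm_eq_abs]
        _ ≤ Real.sqrt (n ν) * ((|Ds s| / ((n ν : ℝ) * (Nn ν : ℝ))) * ‖Ts s‖) :=
            mul_le_mul_of_nonneg_left
              (mul_le_mul_of_nonneg_right habs2 (norm_nonneg _)) (Real.sqrt_nonneg _)
        _ = (Real.sqrt (n ν) / ((n ν : ℝ) * (Nn ν : ℝ))) * (|Ds s| * ‖Ts s‖) := by ring
    -- Markov
    have hmark : ∀ s : Finset (Fin (Nn ν)),
        (if ε < Real.sqrt (n ν) * ‖R ν s‖ then p ν s else 0)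
        ≤ ε⁻¹ * (Real.sqrt (n ν) / ((n ν : ℝ) * (Nn ν : ℝ))) * (p ν s * (|Ds s| * ‖Ts s‖)) := by
      intro s
      by_cases hc : ε < Real.sqrt (n ν) * ‖R ν s‖
      · rw [if_pos hc]
        by_cases hps : p ν s = 0
        · rw [hps]
          simp
        · have hX : ε ≤ (Real.sqrt (n ν) / ((n ν : ℝ) * (Nn ν : ℝ))) * (|Ds s| * ‖Ts s‖) :=
            le_trans hc.le (hRb s hps)
          calc p ν s = ε⁻¹ * (ε * p ν s) := by field_simp
            _ ≤ ε⁻¹ * (((Real.sqrt (n ν) / ((n ν : ℝ) * (Nn ν : ℝ))) * (|Ds s| * ‖Ts s‖)) * p ν s) := by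
                refine mul_le_mul_of_nonneg_left ?_ (inv_nonneg.mpr hε.le)
                exact mul_le_mul_of_nonneg_right hX (hp0 ν s)
            _ = ε⁻¹ * (Real.sqrt (n ν) / ((n ν : ℝ) * (Nn ν : ℝ))) * (p ν s * (|Ds s| * ‖Ts s‖)) := by
                ring
      · rw [if_neg hc]
        have h0 : 0 ≤ (Real.sqrt (n ν) / ((n ν : ℝ) * (Nn ν : ℝ))) := by positivity
        refine mul_nonneg (mul_nonneg (inv_nonneg.mpr hε.le) h0) ?_
        exact mul_nonneg (hp0 ν s) (mul_nonneg (abs_nonneg _) (norm_nonneg _))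
    -- Cauchy–Schwarz
    set W : ℝ := ∑ s : Finset (Fin (Nn ν)), p ν s * (|Ds s| * ‖Ts s‖) with hWdef
    have hW0 : 0 ≤ W := by
      refine Finset.sum_nonneg fun s _ => ?_
      exact mul_nonneg (hp0 ν s) (mul_nonneg (abs_nonneg _) (norm_nonneg _))
    have hWsq : W ^ 2 ≤ (∑ s : Finset (Fin (Nn ν)), p ν s * (Ds s) ^ 2)
        * (∑ s : Finset (Fin (Nn ν)), p ν s * ‖Ts s‖ ^ 2) := by
      have hcs := Finset.sum_mul_sq_le_sq_mul_sq Finset.univ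
        (fun s => Real.sqrt (p ν s) * |Ds s|) (fun s => Real.sqrt (p ν s) * ‖Ts s‖)
      have e1 : ∀ s : Finset (Fin (Nn ν)),
          (Real.sqrt (p ν s) * |Ds s|) * (Real.sqrt (p ν s) * ‖Ts s‖)
          = p ν s * (|Ds s| * ‖Ts s‖) := by
        intro s
        rw [show (Real.sqrt (p ν s) * |Ds s|) * (Real.sqrt (p ν s) * ‖Ts s‖)
          = (Real.sqrt (p ν s) * Real.sqrt (p ν s)) * (|Ds s| * ‖Ts s‖) by ring,
          Real.mul_self_sqrt (hp0 ν s)]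
      have e2 : ∀ s : Finset (Fin (Nn ν)),
          (Real.sqrt (p ν s) * |Ds s|) ^ 2 = p ν s * (Ds s) ^ 2 := by
        intro s
        rw [mul_pow, Real.sq_sqrt (hp0 ν s), sq_abs]
      have e3 : ∀ s : Finset (Fin (Nn ν)),
          (Real.sqrt (p ν s) * ‖Ts s‖) ^ 2 = p ν s * ‖Ts s‖ ^ 2 := by
        intro s
        rw [mul_pow, Real.sq_sqrt (hp0 ν s)]
      rw [Finset.sum_congr rfl fun s _ => e1 s, Finset.sum_congr rfl fun s _ => e2 s,
        Finset.sum_congr rfl fun s _ => e3 s] at hcs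
      exact hcs
    have hW : W ≤ 2 * C * A := by
      have h1 : W ^ 2 ≤ (2 * C * A) ^ 2 := by
        calc W ^ 2 ≤ (∑ s : Finset (Fin (Nn ν)), p ν s * (Ds s) ^ 2)
            * (∑ s : Finset (Fin (Nn ν)), p ν s * ‖Ts s‖ ^ 2) := hWsq
          _ ≤ A * ((2 * C) ^ 2 * A) := by
              refine mul_le_mul hD' hT' ?_ hA0
              refine Finset.sum_nonneg fun s _ => ?_
              exact mul_nonneg (hp0 ν s) (by positivity)
          _ = (2 * C * A) ^ 2 := by ring
      have h2CA : 0 ≤ 2 * C * A := mul_nonneg (by linarith) hA0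
      nlinarith [h1, hW0, h2CA]
    -- put everything together
    calc (∑ s : Finset (Fin (Nn ν)), if ε < Real.sqrt (n ν) * ‖R ν s‖ then p ν s else 0)
        ≤ ∑ s : Finset (Fin (Nn ν)),
            ε⁻¹ * (Real.sqrt (n ν) / ((n ν : ℝ) * (Nn ν : ℝ))) * (p ν s * (|Ds s| * ‖Ts s‖)) :=
          Finset.sum_le_sum fun s _ => hmark s
      _ = ε⁻¹ * (Real.sqrt (n ν) / ((n ν : ℝ) * (Nn ν : ℝ))) * W := by
          rw [hWdef, Finset.mul_sum]
          try exact Finset.sum_congr rfl fun s _ => by ring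
      _ ≤ ε⁻¹ * (Real.sqrt (n ν) / ((n ν : ℝ) * (Nn ν : ℝ))) * (2 * C * A) := by
          refine mul_le_mul_of_nonneg_left hW ?_
          positivity
      _ = g ν := by
          simp only [hg, hAdef, hδdef]
          set t := Real.sqrt ((n ν : ℝ)) with htdef
          have ht0 : 0 < t := Real.sqrt_pos.mpr hnr
          have ht : t * t = (n ν : ℝ) := Real.mul_self_sqrt hnr.le
          rw [← ht]
          field_simp
  -- squeeze
  have hS0 : ∀ ν, 0 ≤ ∑ s : Finset (Fin (Nn ν)),
      (if ε < Real.sqrt (n ν) * ‖R ν s‖ then p ν s else 0) := by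
    intro ν
    refine Finset.sum_nonneg fun s _ => ?_
    split_ifs
    · exact hp0 ν s
    · exact le_rfl
  have hsqrt_atTop : Tendsto (fun ν => Real.sqrt (n ν)) atTop atTop := by
    have h1 : Tendsto Real.sqrt atTop atTop := by
      refine tendsto_atTop_atTop.2 fun b => ⟨max (b ^ 2) 0, fun x hx => ?_⟩
      calc b ≤ |b| := le_abs_self b
        _ = Real.sqrt (b ^ 2) := (Real.sqrt_sq_eq_abs b).symm
        _ ≤ Real.sqrt x := Real.sqrt_le_sqrt (le_trans (le_max_left _ _) hx)
    exact h1.comp (tendsto_natCast_atTop_atTop.comp hn)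
  have hf : Tendsto (fun ν => (Real.sqrt (n ν))⁻¹) atTop (𝓝 0) :=
    tendsto_inv_atTop_zero.comp hsqrt_atTop
  have hinv : Tendsto (fun ν => (Nn ν : ℝ) / (n ν : ℝ)) atTop (𝓝 π₀⁻¹) := by
    have h1 := hA2.inv₀ (ne_of_gt hπ₀.1)
    simpa [inv_div] using h1
  have hgl : Tendsto (fun ν => lam⁻¹ + ((Nn ν : ℝ) / (n ν : ℝ)) * (Cm / lam ^ 2)) atTop
      (𝓝 (lam⁻¹ + π₀⁻¹ * (Cm / lam ^ 2))) :=
    tendsto_const_nhds.add (hinv.mul_const _)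
  have hgz : Tendsto g atTop (𝓝 0) := by
    have h2 := (hf.mul hgl).const_mul (ε⁻¹ * (2 * C))
    simpa [hg] using h2
  exact squeeze_zero hS0 hkey hgz
end
end
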